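/- The circuits of the bicircular matroid B(G) are exactly the edge sets of subgraphs of G that are subdivisions of one of the following graphs: two loops at the same vertex, two loops joined by an edge (a dumbbell), or three parallel edges between two vertices (a theta graph). -/

import Mathlib

open Set

namespace Paper

/-! ### Multigraphs, walks, cycles -/

/-- A multigraph on vertex type `V` with edge type `E`: each edge has an
unordered pair of endpoints (possibly equal, giving a loop). -/
structure Multigraph (V : Type*) (E : Type*) where
  inc : E → Sym2 V

namespace Multigraph

variable {V E : Type*}

/-- `G.IsWalk I u es vs`: starting at vertex `u` and using only edges in `I`,
the edges `es` form a walk that successively visits the vertices `vs`. -/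
inductive IsWalk (G : Multigraph V E) (I : Set E) : V → List E → List V → Prop
  | nil (v : V) : IsWalk G I v [] []
  | cons {u v : V} {e : E} {es : List E} {vs : List V} :
      e ∈ I → G.inc e = s(u, v) → IsWalk G I v es vs → IsWalk G I u (e :: es) (v :: vs)

/-- A walk from `u` to `w` inside the edge set `I`. -/
def IsWalkFrom (G : Multigraph V E) (I : Set E) (u : V) (es : List E) (vs : List V)
    (w : V) : Prop :=
  G.IsWalk I u es vs ∧ (u :: vs).getLast (by simp) = w

/-- `u` and `w` are joined by a walk using edges of `I` (same component of `G[I]`). -/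
def Reachable (G : Multigraph V E) (I : Set E) (u w : V) : Prop :=
  ∃ es vs, G.IsWalkFrom I u es vs w

/-- A cycle based at `v` using edges of `I`: a nonempty closed walk with no repeated
edges and no repeated vertices (except for the base point).  A loop is a cycle of
length `1` and a pair of parallel edges forms a cycle of length `2`. -/
def IsCycle (G : Multigraph V E) (I : Set E) (v : V) (es : List E) (vs : List V) : Prop :=
  G.IsWalkFrom I v es vs v ∧ es ≠ [] ∧ es.Nodup ∧ vs.Nodup

/-- `C` is the edge set of a cycle of the subgraph `G[I]`. -/
def IsCycleIn (G : Multigraph V E) (I : Set E) (C : Set E) : Prop :=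
  ∃ v es vs, G.IsCycle I v es vs ∧ C = {e | e ∈ es}

/-- A path from `u` to `w`: a walk with pairwise distinct vertices. -/
def IsPath (G : Multigraph V E) (I : Set E) (u : V) (es : List E) (vs : List V)
    (w : V) : Prop :=
  G.IsWalkFrom I u es vs w ∧ (u :: vs).Nodup

/-- The vertices covered by an edge set `D`; the vertex set of `G[D]`. -/
def verts (G : Multigraph V E) (D : Set E) : Set V := {v | ∃ e ∈ D, v ∈ G.inc e}

/-- The degree of `v` in the subgraph `G[D]` (loops count twice). -/
noncomputable def degree (G : Multigraph V E) (D : Set E) (v : V) : ℕ :=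
  {e ∈ D | v ∈ G.inc e}.ncard + {e ∈ D | G.inc e = s(v, v)}.ncard

/-- Every connected component of `G[I]` contains at most one cycle:
any two cycles of `G[I]` lying in the same component coincide. -/
def BicircIndep (G : Multigraph V E) (I : Set E) : Prop :=
  ∀ C₁ C₂ : Set E, G.IsCycleIn I C₁ → G.IsCycleIn I C₂ →
    (∃ u w, u ∈ G.verts C₁ ∧ w ∈ G.verts C₂ ∧ G.Reachable I u w) → C₁ = C₂

/-- `M` is the bicircular matroid `B(G)` of the multigraph `G`. -/
def IsBicircularOf (G : Multigraph V E) (M : Matroid E) : Prop :=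
  M.E = univ ∧ ∀ I : Set E, M.Indep I ↔ G.BicircIndep I

end Multigraph

/-! ### Matroid notions -/

variable {α : Type*}

/-- The (extended) rank of a set in a matroid. -/
noncomputable def eRk (M : Matroid α) (X : Set α) : ℕ∞ :=
  ⨆ I ∈ {I | M.Indep I ∧ I ⊆ X}, I.encard

/-- A circuit: a minimal dependent set. -/
def Circuit (M : Matroid α) (C : Set α) : Prop :=
  M.Dep C ∧ ∀ D ⊂ C, ¬ M.Dep D

/-- A double circuit: a finite set `D` with `r(D) = |D| - 2` whose rank does not drop
when any single element is removed. -/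
def DoubleCircuit (M : Matroid α) (D : Set α) : Prop :=
  D ⊆ M.E ∧ D.Finite ∧ eRk M D + 2 = D.encard ∧ ∀ d ∈ D, eRk M (D \ {d}) = eRk M D

/-- `f` is a circuit partition of `D`: a partition of `D` into nonempty parts such that the
circuits of `M` contained in `D` are exactly the complements in `D` of the parts. -/
def CircuitPartition (M : Matroid α) (D : Set α) {k : ℕ} (f : Fin k → Set α) : Prop :=
  (∀ i, (f i).Nonempty) ∧ (∀ i j : Fin k, i ≠ j → Disjoint (f i) (f j)) ∧
    (⋃ i, f i) = D ∧ ∀ C : Set α, (Circuit M C ∧ C ⊆ D) ↔ ∃ i, C = D \ f i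

/-- A part of a partition is singular if it has exactly one element. -/
def PositiveDoubleCircuit (M : Matroid α) (D : Set α) : Prop :=
  DoubleCircuit M D ∧ ∃ (k : ℕ) (f : Fin k → Set α), CircuitPartition M D f ∧
    {i : Fin k | (f i).encard ≠ 1}.ncard < {i : Fin k | (f i).encard = 1}.ncard

/-- A hyperplane (copoint): a maximal proper flat. -/
def Hyperplane (M : Matroid α) (H : Set α) : Prop :=
  M.IsFlat H ∧ H ≠ M.E ∧ ∀ F, M.IsFlat F → H ⊂ F → F = M.E

/-- A coline: a flat of rank `r(M) - 2`. -/
def Coline (M : Matroid α) (L : Set α) : Prop :=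
  M.IsFlat L ∧ eRk M L + 2 = eRk M M.E

/-- A positive coline: more simple copoints on `L` than multiple copoints on `L`. -/
def PositiveColine (M : Matroid α) (L : Set α) : Prop :=
  Coline M L ∧
    {H | Hyperplane M H ∧ L ⊆ H ∧ (H \ L).encard ≠ 1}.ncard <
      {H | Hyperplane M H ∧ L ⊆ H ∧ (H \ L).encard = 1}.ncard

/-- Deletion of a set of elements. -/
def delete (M : Matroid α) (D : Set α) : Matroid α := M.restrict (M.E \ D)

/-- Contraction of a set of elements. -/
def contract (M : Matroid α) (C : Set α) : Matroid α := (delete M✶ C)✶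

/-- `N` is a minor of `M`. -/
def IsMinorOf (N M : Matroid α) : Prop := ∃ C D : Set α, N = delete (contract M C) D

/-- `M` is (isomorphic to) the uniform matroid `U_{r,n}`. -/
def IsUniform (r n : ℕ) {β : Type*} (M : Matroid β) : Prop :=
  M.E.encard = n ∧ ∀ I ⊆ M.E, (M.Indep I ↔ I.encard ≤ (r : ℕ∞))

/-- A simple matroid: every set of at most two elements of the ground set is independent. -/
def IsSimple (M : Matroid α) : Prop := ∀ X ⊆ M.E, X.encard ≤ 2 → M.Indep X


namespace Multigraph

variable {V E : Type*}

/-- `D` is the edge set of a subdivision of two loops at the same vertex: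
two edge-disjoint cycles sharing exactly one vertex. -/
def IsFigureEight (G : Multigraph V E) (D : Set E) : Prop :=
  ∃ C₁ C₂ : Set E, G.IsCycleIn D C₁ ∧ G.IsCycleIn D C₂ ∧ Disjoint C₁ C₂ ∧
    (∃ w, G.verts C₁ ∩ G.verts C₂ = {w}) ∧ D = C₁ ∪ C₂

/-- `D` is the edge set of a subdivision of two loops joined by an edge (a dumbbell):
two vertex-disjoint cycles joined by a nontrivial path that is internally disjoint
from both. -/
def IsDumbbell (G : Multigraph V E) (D : Set E) : Prop :=
  ∃ (C₁ C₂ : Set E) (u w : V) (es : List E) (vs : List V),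
    G.IsCycleIn D C₁ ∧ G.IsCycleIn D C₂ ∧ Disjoint (G.verts C₁) (G.verts C₂) ∧
    G.IsPath D u es vs w ∧ es ≠ [] ∧ u ∈ G.verts C₁ ∧ w ∈ G.verts C₂ ∧
    (∀ x ∈ vs.dropLast, x ∉ G.verts C₁ ∪ G.verts C₂) ∧
    (∀ e ∈ es, e ∉ C₁ ∪ C₂) ∧ D = C₁ ∪ C₂ ∪ {e | e ∈ es}

/-- `D` is the edge set of a subdivision of three parallel edges (a theta graph):
three pairwise internally disjoint paths between two distinct vertices. -/
def IsTheta (G : Multigraph V E) (D : Set E) : Prop :=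
  ∃ (u w : V) (es₁ es₂ es₃ : List E) (vs₁ vs₂ vs₃ : List V),
    u ≠ w ∧ G.IsPath D u es₁ vs₁ w ∧ G.IsPath D u es₂ vs₂ w ∧ G.IsPath D u es₃ vs₃ w ∧
    (∀ e, ¬ (e ∈ es₁ ∧ e ∈ es₂)) ∧ (∀ e, ¬ (e ∈ es₁ ∧ e ∈ es₃)) ∧
    (∀ e, ¬ (e ∈ es₂ ∧ e ∈ es₃)) ∧
    (∀ x, ¬ (x ∈ vs₁.dropLast ∧ x ∈ vs₂.dropLast)) ∧
    (∀ x, ¬ (x ∈ vs₁.dropLast ∧ x ∈ vs₃.dropLast)) ∧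
    (∀ x, ¬ (x ∈ vs₂.dropLast ∧ x ∈ vs₃.dropLast)) ∧
    D = {e | e ∈ es₁ ∨ e ∈ es₂ ∨ e ∈ es₃}

end Multigraph

namespace Multigraph

variable {V E : Type*} {G : Multigraph V E} {I J : Set E} {u v w x y : V}
  {e f : E} {es es' es₁ es₂ : List E} {vs vs' vs₁ vs₂ : List V}

theorem IsWalk.length_eq (h : G.IsWalk I u es vs) : vs.length = es.length := by
  induction h <;> simp [*]

theorem IsWalk.edges_mem (h : G.IsWalk I u es vs) : ∀ e ∈ es, e ∈ I := by
  induction h with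
  | nil v => simp
  | cons he hinc hw ih =>
    intro f hf
    rcases List.mem_cons.1 hf with rfl | hf
    · exact he
    · exact ih f hf

theorem IsWalk.mono (h : G.IsWalk I u es vs) (hIJ : ∀ e ∈ es, e ∈ J) :
    G.IsWalk J u es vs := by
  induction h with
  | nil v => exact .nil v
  | cons he hinc hw ih =>
    exact .cons (hIJ _ (List.mem_cons_self)) hinc
      (ih fun e he' => hIJ _ (List.mem_cons_of_mem _ he'))

theorem IsWalk.subset (h : G.IsWalk I u es vs) (hIJ : I ⊆ J) : G.IsWalk J u es vs :=
  h.mono fun e he => hIJ (h.edges_mem e he)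

theorem getLast_cons_append (u x : V) (vs₁ vs₂ : List V)
    (h : (u::vs₁).getLast (by simp) = x) :
    (u :: (vs₁ ++ vs₂)).getLast (by simp) = (x :: vs₂).getLast (by simp) := by
  induction vs₁ generalizing u with
  | nil => simp at h; subst h; rfl
  | cons a l ih =>
    rw [List.getLast_cons (by simp)] at h
    exact (List.getLast_cons (by simp)).trans (ih a h)

theorem IsWalk.append (h1 : G.IsWalk I u es vs)
    (h2 : G.IsWalk I ((u::vs).getLast (by simp)) es' vs') :
    G.IsWalk I u (es ++ es') (vs ++ vs') := by
  induction h1 with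
  | nil v => simpa using h2
  | cons he hinc hw ih =>
    refine .cons he hinc (ih ?_)
    rwa [List.getLast_cons (by simp)] at h2

theorem IsWalkFrom.append (h1 : G.IsWalkFrom I u es vs w)
    (h2 : G.IsWalkFrom I w es' vs' x) :
    G.IsWalkFrom I u (es ++ es') (vs ++ vs') x := by
  obtain ⟨hw1, hl1⟩ := h1
  obtain ⟨hw2, hl2⟩ := h2
  refine ⟨hw1.append (by rwa [hl1]), ?_⟩
  rw [getLast_cons_append u w vs vs' hl1]
  exact hl2

theorem IsWalk.isWalkFrom (h : G.IsWalk I u es vs) :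
    G.IsWalkFrom I u es vs ((u::vs).getLast (by simp)) := ⟨h, rfl⟩

theorem IsWalkFrom.reverse (h : G.IsWalkFrom I u es vs w) :
    G.IsWalkFrom I w es.reverse ((u::vs).dropLast.reverse) u := by
  obtain ⟨hw, hl⟩ := h
  subst hl
  induction hw with
  | nil v => exact ⟨.nil v, rfl⟩
  | @cons a b e es vs he hinc hw ih =>
    rw [List.getLast_cons (by simp)]
    have h1 : G.IsWalkFrom I b [e] [a] a := by
      refine ⟨.cons he ?_ (.nil a), rfl⟩
      rw [hinc]; exact Sym2.eq_swap
    have := ih.append h1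
    simpa using this

theorem IsWalk.exists_endpoints (h : G.IsWalk I u es vs) (he : e ∈ es) :
    ∃ p q, G.inc e = s(p, q) ∧ p ∈ u :: vs ∧ q ∈ vs := by
  induction h with
  | nil v => simp at he
  | @cons a b e' es vs he' hinc hw ih =>
    rcases List.mem_cons.1 he with rfl | he
    · exact ⟨a, b, hinc, by simp, by simp⟩
    · obtain ⟨p, q, h1, h2, h3⟩ := ih he
      exact ⟨p, q, h1, List.mem_cons_of_mem _ h2, List.mem_cons_of_mem _ h3⟩

theorem mem_verts (hD : e ∈ I) (hx : x ∈ G.inc e) : x ∈ G.verts I := ⟨e, hD, hx⟩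

theorem verts_mono (h : I ⊆ J) : G.verts I ⊆ G.verts J :=
  fun _ ⟨e, he, hx⟩ => ⟨e, h he, hx⟩

theorem verts_union : G.verts (I ∪ J) = G.verts I ∪ G.verts J := by
  ext x
  constructor
  · rintro ⟨e, he | he, hx⟩
    · exact Or.inl ⟨e, he, hx⟩
    · exact Or.inr ⟨e, he, hx⟩
  · rintro (⟨e, he, hx⟩ | ⟨e, he, hx⟩)
    · exact ⟨e, Or.inl he, hx⟩
    · exact ⟨e, Or.inr he, hx⟩

theorem IsWalk.vs_subset_verts (h : G.IsWalk I u es vs) :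
    ∀ y ∈ vs, y ∈ G.verts {e | e ∈ es} := by
  induction h with
  | nil v => simp
  | @cons a b e es vs he hinc hw ih =>
    intro y hy
    rcases List.mem_cons.1 hy with rfl | hy
    · exact ⟨e, by simp, by rw [hinc]; simp⟩
    · obtain ⟨e', he', hx⟩ := ih y hy
      exact ⟨e', by simp; right; exact he', hx⟩

theorem IsWalk.head_mem_verts (h : G.IsWalk I u es vs) (hne : es ≠ []) :
    u ∈ G.verts {e | e ∈ es} := by
  cases h with
  | nil => simp at hne
  | cons he hinc hw => exact ⟨_, List.mem_cons_self, by rw [hinc]; simp⟩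

theorem IsWalk.verts_subset (h : G.IsWalk I u es vs) :
    G.verts {e | e ∈ es} ⊆ {y | y ∈ u :: vs} := by
  rintro y ⟨e, he, hy⟩
  obtain ⟨p, q, hpq, hp, hq⟩ := h.exists_endpoints he
  rw [hpq, Sym2.mem_iff] at hy
  rcases hy with rfl | rfl
  · exact hp
  · exact List.mem_cons_of_mem _ hq

theorem IsWalk.split (h : G.IsWalk I u es vs) (hx : x ∈ vs) :
    ∃ es₁ es₂ vs₁ vs₂, es = es₁ ++ es₂ ∧ vs = vs₁ ++ vs₂ ∧ vs₁ ≠ [] ∧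
      G.IsWalkFrom I u es₁ vs₁ x ∧ G.IsWalk I x es₂ vs₂ := by
  induction h with
  | nil v => simp at hx
  | @cons a b e es vs he hinc hw ih =>
    rcases List.mem_cons.1 hx with rfl | hx
    · exact ⟨[e], es, [x], vs, rfl, rfl, by simp, ⟨.cons he hinc (.nil x), by simp⟩, hw⟩
    · obtain ⟨es₁, es₂, vs₁, vs₂, h1, h2, h3, h4, h5⟩ := ih hx
      refine ⟨e :: es₁, es₂, b :: vs₁, vs₂, by simp [h1], by simp [h2], by simp, ?_, h5⟩
      refine ⟨.cons he hinc h4.1, ?_⟩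
      rw [List.getLast_cons (by simp)]
      exact h4.2

end Multigraph
namespace Multigraph

variable {V E : Type*} {G : Multigraph V E} {I J : Set E} {u v w x y : V}
  {e f : E} {es es' es₁ es₂ : List E} {vs vs' vs₁ vs₂ : List V}

theorem getLast_cons_eq (hvs : vs ≠ []) :
    (u :: vs).getLast (by simp) = vs.getLast hvs := List.getLast_cons hvs

theorem getLast_mem_of_ne (hvs : vs ≠ []) (h : (u :: vs).getLast (by simp) = w) :
    w ∈ vs := by
  rw [getLast_cons_eq hvs] at h
  exact h ▸ List.getLast_mem hvs

theorem reachable_refl (G : Multigraph V E) (I : Set E) (u : V) : G.Reachable I u u :=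
  ⟨[], [], .nil u, rfl⟩

theorem Reachable.symm (h : G.Reachable I u w) : G.Reachable I w u := by
  obtain ⟨es, vs, h⟩ := h
  exact ⟨_, _, h.reverse⟩

theorem Reachable.trans (h1 : G.Reachable I u v) (h2 : G.Reachable I v w) :
    G.Reachable I u w := by
  obtain ⟨es, vs, h1⟩ := h1
  obtain ⟨es', vs', h2⟩ := h2
  exact ⟨_, _, h1.append h2⟩

theorem Reachable.mono (h : G.Reachable I u w) (hIJ : I ⊆ J) : G.Reachable J u w := by
  obtain ⟨es, vs, h1, h2⟩ := h
  exact ⟨es, vs, h1.subset hIJ, h2⟩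

theorem exists_path_aux (n : ℕ) : ∀ (es : List E) (vs : List V) (u w : V),
    es.length ≤ n → G.IsWalkFrom I u es vs w →
    ∃ es' vs', G.IsPath I u es' vs' w ∧ (∀ e ∈ es', e ∈ es) ∧ (∀ y ∈ vs', y ∈ vs) := by
  induction n with
  | zero =>
    intro es vs u w hlen h
    obtain ⟨h1, h2⟩ := h
    cases h1 with
    | nil => exact ⟨[], [], ⟨⟨.nil u, h2⟩, by simp⟩, by simp, by simp⟩
    | cons => simp at hlen
  | succ n ih =>
    intro es vs u w hlen h
    by_cases hu : u ∈ vs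
    · obtain ⟨es₁, es₂, vs₁, vs₂, he, hv, hv1, hwf1, hwk2⟩ := h.1.split hu
      by_cases hvs : vs₂ = []
      · have hes2 : es₂ = [] := by
          have := hwk2.length_eq; rw [hvs] at this; simpa using (this.symm : _)
        have hw' : w = u := by
          have := h.2
          rw [hv, hvs, List.append_nil] at this
          exact this.symm.trans hwf1.2
        exact ⟨[], [], ⟨⟨.nil u, by simp [hw']⟩, by simp⟩, by simp, by simp⟩
      · have hlast : (u :: vs₂).getLast (by simp) = w := by
          have := h.2
          rw [hv, getLast_cons_append u u vs₁ vs₂ hwf1.2] at this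
          exact this
        have hes1 : es₁ ≠ [] := by
          intro hh
          have := hwf1.1.length_eq
          rw [hh] at this
          exact hv1 (List.length_eq_zero_iff.1 (by simpa using this))
        have hlen2 : es₂.length ≤ n := by
          have : es.length = es₁.length + es₂.length := by rw [he]; simp
          have h1 : 1 ≤ es₁.length := by
            cases es₁ with
            | nil => exact absurd rfl hes1
            | cons a l => simp
          omega
        obtain ⟨es', vs', hp, hsub1, hsub2⟩ := ih es₂ vs₂ u w hlen2 ⟨hwk2, hlast⟩
        exact ⟨es', vs', hp, fun e hee => by rw [he]; exact List.mem_append_right _ (hsub1 e hee),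
          fun z hz => by rw [hv]; exact List.mem_append_right _ (hsub2 z hz)⟩
    · obtain ⟨h1, h2⟩ := h
      cases h1 with
      | nil => exact ⟨[], [], ⟨⟨.nil u, h2⟩, by simp⟩, by simp, by simp⟩
      | @cons _ b e es0 vs0 he hinc hw' =>
        have hlast : (b :: vs0).getLast (by simp) = w := by
          rw [← h2]; exact (List.getLast_cons (by simp)).symm
        obtain ⟨es', vs', hp, hsub1, hsub2⟩ := ih es0 vs0 b w (by simpa using hlen)
          ⟨hw', hlast⟩
        refine ⟨e :: es', b :: vs', ⟨⟨.cons he hinc hp.1.1, ?_⟩, ?_⟩, ?_, ?_⟩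
        · rw [List.getLast_cons (by simp)]; exact hp.1.2
        · refine List.nodup_cons.2 ⟨?_, hp.2⟩
          intro hmem
          rcases List.mem_cons.1 hmem with rfl | hmem
          · exact hu (List.mem_cons_self)
          · exact hu (List.mem_cons_of_mem _ (hsub2 _ hmem))
        · intro f hf
          rcases List.mem_cons.1 hf with rfl | hf
          · exact List.mem_cons_self
          · exact List.mem_cons_of_mem _ (hsub1 f hf)
        · intro z hz
          rcases List.mem_cons.1 hz with rfl | hz
          · exact List.mem_cons_self
          · exact List.mem_cons_of_mem _ (hsub2 z hz)

theorem IsWalkFrom.exists_path (h : G.IsWalkFrom I u es vs w) :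
    ∃ es' vs', G.IsPath I u es' vs' w ∧ (∀ e ∈ es', e ∈ es) ∧ (∀ y ∈ vs', y ∈ vs) :=
  exists_path_aux es.length es vs u w le_rfl h

end Multigraph
namespace Multigraph

variable {V E : Type*} {G : Multigraph V E} {I J D C : Set E} {u v w x y : V}
  {e f : E} {es es' es₁ es₂ : List E} {vs vs' vs₁ vs₂ : List V}

theorem IsWalk.split_edge (h : G.IsWalk I u es vs) :
    ∀ es₁ (e : E) es₂, es = es₁ ++ e :: es₂ →
    ∃ vs₁ p b vs₂, vs = vs₁ ++ b :: vs₂ ∧ vs₁.length = es₁.length ∧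
      G.IsWalkFrom I u es₁ vs₁ p ∧ G.inc e = s(p, b) ∧ G.IsWalk I b es₂ vs₂ ∧
      (vs₁ = [] → p = u) ∧ (vs₁ ≠ [] → p ∈ vs₁) := by
  induction h with
  | nil v => intro es₁ e es₂ hh; exact absurd hh (by simp)
  | @cons a b e' es0 vs0 he' hinc hw ih =>
    intro es₁ e es₂ hh
    cases es₁ with
    | nil =>
      simp only [List.nil_append] at hh
      obtain ⟨h1, h2⟩ := List.cons.inj hh
      subst h1; subst h2
      exact ⟨[], a, b, vs0, rfl, rfl, ⟨.nil a, rfl⟩, hinc, hw, fun _ => rfl, by simp⟩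
    | cons a' es₁' =>
      obtain ⟨h1, hh2⟩ := List.cons.inj hh
      subst h1
      obtain ⟨vs₁', p, c, vs₂', hv, hlen, hwf, hince, hwk, hnil, hmem⟩ := ih es₁' e es₂ hh2
      refine ⟨b :: vs₁', p, c, vs₂', by simp [hv], by simp [hlen], ?_, hince, hwk, ?_, ?_⟩
      · refine ⟨.cons he' hinc hwf.1, ?_⟩
        rw [List.getLast_cons (by simp)]
        exact hwf.2
      · intro hh3; exact absurd hh3 (by simp)
      · intro _
        by_cases h0 : vs₁' = []
        · subst h0
          simp [hnil rfl]
        · exact List.mem_cons_of_mem _ (hmem h0)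

theorem IsPath.edges_nodup_aux (h : G.IsWalk I u es vs) (hnd : (u :: vs).Nodup) :
    es.Nodup := by
  induction h with
  | nil v => simp
  | @cons a b e es0 vs0 he hinc hw ih =>
    have hnd' : (b :: vs0).Nodup := hnd.of_cons
    refine List.nodup_cons.2 ⟨?_, ih hnd'⟩
    intro hmem
    obtain ⟨p, q, hpq, hp, hq⟩ := hw.exists_endpoints hmem
    rw [hinc] at hpq
    have hu : a ∉ b :: vs0 := (List.nodup_cons.1 hnd).1
    rcases Sym2.eq_iff.1 hpq with ⟨rfl, rfl⟩ | ⟨rfl, rfl⟩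
    · exact hu hp
    · exact hu (List.mem_cons_of_mem _ hq)

theorem IsPath.edges_nodup (h : G.IsPath I u es vs w) : es.Nodup :=
  IsPath.edges_nodup_aux h.1.1 h.2

theorem IsCycle.vs_ne_nil (h : G.IsCycle I v es vs) : vs ≠ [] := by
  intro hh
  have := h.1.1.length_eq
  rw [hh] at this
  exact h.2.1 (List.length_eq_zero_iff.1 (by simpa using this.symm))

theorem IsCycle.base_mem (h : G.IsCycle I v es vs) : v ∈ vs :=
  getLast_mem_of_ne h.vs_ne_nil h.1.2

theorem IsCycle.verts_eq (h : G.IsCycle I v es vs) :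
    G.verts {e | e ∈ es} = {y | y ∈ vs} := by
  apply Set.Subset.antisymm
  · intro y hy
    have := h.1.1.verts_subset hy
    rcases List.mem_cons.1 this with rfl | hh
    · exact h.base_mem
    · exact hh
  · intro y hy
    exact h.1.1.vs_subset_verts y hy

theorem IsCycle.loop_eq (h : G.IsCycle I v es vs) (he : e ∈ es)
    (hloop : G.inc e = s(x, x)) : es = [e] := by
  obtain ⟨t1, t2, ht⟩ := List.append_of_mem he
  obtain ⟨vs₁, p, b, vs₂, hv, hlen, hwf, hince, hwk, hnil, hmem⟩ := h.1.1.split_edge t1 e t2 ht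
  rw [hloop] at hince
  obtain ⟨hp, hb⟩ : x = p ∧ x = b := by
    rcases Sym2.eq_iff.1 hince.symm with ⟨h1, h2⟩ | ⟨h1, h2⟩
    · exact ⟨h1.symm, h2.symm⟩
    · exact ⟨h1.symm, h2.symm⟩
  subst hb
  cases hvs1 : vs₁ with
  | nil =>
    subst hvs1
    have hxv : x = v := hp.trans (hnil rfl)
    simp only [List.nil_append] at hv
    -- vs = x :: vs₂
    have hvs2 : vs₂ = [] := by
      by_contra hne
      have hlast : (x :: vs₂).getLast (by simp) = x := by
        have h2 := h.1.2
        rw [getLast_cons_eq h.vs_ne_nil] at h2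
        have : vs.getLast h.vs_ne_nil = x := h2.trans hxv.symm
        calc (x :: vs₂).getLast (by simp) = vs.getLast h.vs_ne_nil := by
              congr 1 <;> rw [hv]
          _ = x := this
      have hxmem : x ∈ vs₂ := getLast_mem_of_ne hne hlast
      have hvnd := h.2.2.2
      rw [hv] at hvnd
      exact (List.nodup_cons.1 hvnd).1 hxmem
    subst hvs2
    have hL : vs.length = es.length := h.1.1.length_eq
    rw [hv, ht] at hL
    have ht1 : t1 = [] := by
      have := hlen
      simpa using List.length_eq_zero_iff.1 this.symm
    subst ht1
    have ht2 : t2 = [] := by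
      apply List.length_eq_zero_iff.1
      simp only [List.nil_append, List.length_cons, List.length_nil,
        List.length_append] at hL
      omega
    subst ht2
    simpa using ht
  | cons c l =>
    exfalso
    have hxmem1 : x ∈ vs₁ := by
      rw [hp]; exact hmem (by rw [hvs1]; simp)
    have hvnd := h.2.2.2
    rw [hv] at hvnd
    exact (List.nodup_append'.1 hvnd).2.2 hxmem1 (List.mem_cons_self)

theorem IsCycle.rotate (h : G.IsCycle I v es vs) (hx : x ∈ vs) :
    ∃ es' vs', G.IsCycle I x es' vs' ∧ es'.Perm es ∧ vs'.Perm vs := by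
  obtain ⟨es₁, es₂, vs₁, vs₂, he, hv, hv1, hwf1, hwk2⟩ := h.1.1.split hx
  by_cases hvs : vs₂ = []
  · have hxv : x = v := by
      have h2 := h.1.2
      rw [hv, hvs, List.append_nil] at h2
      exact (hwf1.2.symm.trans h2)
    subst hxv
    exact ⟨es, vs, h, List.Perm.refl _, List.Perm.refl _⟩
  · have hlast2 : (x :: vs₂).getLast (by simp) = v := by
      have h2 := h.1.2
      rw [hv, getLast_cons_append v x vs₁ vs₂ hwf1.2] at h2
      exact h2
    have hwf2 : G.IsWalkFrom I x es₂ vs₂ v := ⟨hwk2, hlast2⟩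
    have hwfnew : G.IsWalkFrom I x (es₂ ++ es₁) (vs₂ ++ vs₁) x := hwf2.append hwf1
    have hpe : (es₂ ++ es₁).Perm es := by rw [he]; exact List.perm_append_comm
    have hpv : (vs₂ ++ vs₁).Perm vs := by rw [hv]; exact List.perm_append_comm
    refine ⟨es₂ ++ es₁, vs₂ ++ vs₁, ⟨hwfnew, ?_, ?_, ?_⟩, hpe, hpv⟩
    · intro hh
      rw [List.append_eq_nil_iff] at hh
      have := hwf1.1.length_eq
      rw [hh.2] at this
      exact hv1 (List.length_eq_zero_iff.1 (by simpa using this))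
    · exact hpe.nodup_iff.2 h.2.2.1
    · exact hpv.nodup_iff.2 h.2.2.2

end Multigraph
namespace Multigraph

variable {V E : Type*} {G : Multigraph V E} {I J D : Set E} {u v w x y : V}
  {e f : E} {es es' es₁ es₂ : List E} {vs vs' vs₁ vs₂ : List V}

theorem IsWalk.nil_iff (h : G.IsWalk I u es vs) : es = [] ↔ vs = [] := by
  constructor
  · intro hh
    have := h.length_eq
    rw [hh] at this
    exact List.length_eq_zero_iff.1 (by simpa using this)
  · intro hh
    have := h.length_eq
    rw [hh] at this
    exact List.length_eq_zero_iff.1 (by simpa using this.symm)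

theorem IsWalkFrom.ne_nil (h : G.IsWalkFrom I u es vs w) (hne : u ≠ w) : es ≠ [] := by
  intro hh
  obtain ⟨h1, h2⟩ := h
  have hv : vs = [] := h1.nil_iff.1 hh
  rw [hv] at h2
  exact hne h2

theorem mem_dropLast_or_getLast (hvs : vs ≠ []) (hx : x ∈ vs) :
    x ∈ vs.dropLast ∨ x = vs.getLast hvs := by
  have hdec := List.dropLast_append_getLast hvs
  rw [← hdec] at hx
  rcases List.mem_append.1 hx with h | h
  · exact Or.inl h
  · exact Or.inr (by simpa using h)

theorem getLast_not_mem_dropLast (hvs : vs ≠ []) (hnd : vs.Nodup) :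
    vs.getLast hvs ∉ vs.dropLast := by
  intro hmem
  have hdec := List.dropLast_append_getLast hvs
  rw [← hdec] at hnd
  have := (List.nodup_append'.1 hnd).2.2
  exact this hmem (by simp)

theorem dropLast_cons_ne (u : V) (hvs : vs ≠ []) :
    (u :: vs).dropLast = u :: vs.dropLast := by
  cases vs with
  | nil => exact absurd rfl hvs
  | cons b l => rfl

/-- shorthand for the dependence condition -/
def Bad (G : Multigraph V E) (I : Set E) : Prop :=
  ∃ C₁ C₂ : Set E, G.IsCycleIn I C₁ ∧ G.IsCycleIn I C₂ ∧ C₁ ≠ C₂ ∧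
    (∃ a b, a ∈ G.verts C₁ ∧ b ∈ G.verts C₂ ∧ G.Reachable I a b)

theorem not_bicircIndep_iff : ¬ G.BicircIndep I ↔ G.Bad I := by
  unfold BicircIndep Bad
  push_neg
  constructor
  · rintro ⟨C₁, C₂, h1, h2, h3, h4⟩
    exact ⟨C₁, C₂, h1, h2, h4, h3⟩
  · rintro ⟨C₁, C₂, h1, h2, h3, h4⟩
    exact ⟨C₁, C₂, h1, h2, h4, h3⟩

theorem IsCycleIn.nonempty (h : G.IsCycleIn I D) : D.Nonempty := by
  obtain ⟨v, es, vs, hc, rfl⟩ := h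
  cases es with
  | nil => exact absurd rfl hc.2.1
  | cons e l => exact ⟨e, List.mem_cons_self⟩

theorem IsCycleIn.verts_nonempty (h : G.IsCycleIn I D) : (G.verts D).Nonempty := by
  obtain ⟨v, es, vs, hc, rfl⟩ := h
  exact ⟨v, hc.verts_eq ▸ hc.base_mem⟩

theorem IsCycleIn.subset (h : G.IsCycleIn I D) : D ⊆ I := by
  obtain ⟨v, es, vs, hc, rfl⟩ := h
  exact fun e he => hc.1.1.edges_mem e he

theorem IsCycleIn.of_subset (h : G.IsCycleIn I D) (hJ : D ⊆ J) : G.IsCycleIn J D := by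
  obtain ⟨v, es, vs, hc, rfl⟩ := h
  refine ⟨v, es, vs, ⟨⟨hc.1.1.mono (fun e he => hJ he), hc.1.2⟩, hc.2⟩, rfl⟩

theorem IsFigureEight.bad (h : G.IsFigureEight D) : G.Bad D := by
  obtain ⟨C₁, C₂, h1, h2, hdisj, ⟨w, hw⟩, rfl⟩ := h
  have hwmem : w ∈ G.verts C₁ ∩ G.verts C₂ := hw ▸ Set.mem_singleton w
  refine ⟨C₁, C₂, h1, h2, ?_, w, w, hwmem.1, hwmem.2, reachable_refl G _ w⟩
  intro hEq
  obtain ⟨e, he⟩ := h1.nonempty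
  exact Set.disjoint_left.1 hdisj he (hEq ▸ he)

theorem IsDumbbell.bad (h : G.IsDumbbell D) : G.Bad D := by
  obtain ⟨C₁, C₂, u, w, es, vs, h1, h2, hdisj, hpath, hne, hu, hw, hint, hedge, rfl⟩ := h
  refine ⟨C₁, C₂, h1, h2, ?_, u, w, hu, hw, ⟨es, vs, hpath.1⟩⟩
  intro hEq
  obtain ⟨a, ha⟩ := h1.verts_nonempty
  exact Set.disjoint_left.1 hdisj ha (hEq ▸ ha)

theorem theta_cycle {D : Set E} (hu : u ≠ w)
    (hp1 : G.IsPath D u es₁ vs₁ w) (hp2 : G.IsPath D u es₂ vs₂ w)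
    (hd : ∀ e, ¬ (e ∈ es₁ ∧ e ∈ es₂))
    (hv : ∀ x, ¬ (x ∈ vs₁.dropLast ∧ x ∈ vs₂.dropLast)) :
    G.IsCycleIn D {e | e ∈ es₁ ∨ e ∈ es₂} ∧ u ∈ G.verts {e | e ∈ es₁ ∨ e ∈ es₂} := by
  have hes1 : es₁ ≠ [] := hp1.1.ne_nil hu
  have hes2 : es₂ ≠ [] := hp2.1.ne_nil hu
  have hvs1 : vs₁ ≠ [] := fun hh => hes1 (hp1.1.1.nil_iff.2 hh)
  have hvs2 : vs₂ ≠ [] := fun hh => hes2 (hp2.1.1.nil_iff.2 hh)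
  have hwf : G.IsWalkFrom D u (es₁ ++ es₂.reverse)
      (vs₁ ++ ((u :: vs₂).dropLast.reverse)) u := hp1.1.append hp2.1.reverse
  have hdrop : (u :: vs₂).dropLast = u :: vs₂.dropLast := dropLast_cons_ne u hvs2
  have hu2 : u ∉ vs₂ := (List.nodup_cons.1 hp2.2).1
  have hu1 : u ∉ vs₁ := (List.nodup_cons.1 hp1.2).1
  have hlast1 : vs₁.getLast hvs1 = w := by
    have := hp1.1.2
    rwa [getLast_cons_eq hvs1] at this
  have hlast2 : vs₂.getLast hvs2 = w := by
    have := hp2.1.2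
    rwa [getLast_cons_eq hvs2] at this
  have hnd1 : vs₁.Nodup := hp1.2.of_cons
  have hnd2 : vs₂.Nodup := hp2.2.of_cons
  have hcyc : G.IsCycle D u (es₁ ++ es₂.reverse) (vs₁ ++ ((u :: vs₂).dropLast.reverse)) := by
    refine ⟨hwf, by simp [hes1], ?_, ?_⟩
    · refine List.nodup_append'.2 ⟨hp1.edges_nodup, by
        rw [List.nodup_reverse]; exact hp2.edges_nodup, ?_⟩
      intro a ha ha'
      exact hd a ⟨ha, List.mem_reverse.1 ha'⟩
    · refine List.nodup_append'.2 ⟨hnd1, ?_, ?_⟩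
      · rw [List.nodup_reverse, hdrop]
        exact List.nodup_cons.2 ⟨fun hh => hu2 ((List.dropLast_sublist vs₂).mem hh),
          hnd2.sublist (List.dropLast_sublist vs₂)⟩
      · intro a ha ha'
        rw [List.mem_reverse, hdrop] at ha'
        rcases List.mem_cons.1 ha' with rfl | ha'
        · exact hu1 ha
        · rcases mem_dropLast_or_getLast hvs1 ha with h' | h'
          · exact hv a ⟨h', ha'⟩
          · rw [h', hlast1] at ha'
            exact getLast_not_mem_dropLast hvs2 hnd2 (hlast2 ▸ ha')
  have hset : {e | e ∈ es₁ ∨ e ∈ es₂} = {e | e ∈ es₁ ++ es₂.reverse} := by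
    ext a; simp [List.mem_append, List.mem_reverse]
  constructor
  · exact ⟨u, _, _, hcyc, hset⟩
  · rw [hset]
    exact hwf.1.head_mem_verts (by simp [hes1])

theorem IsTheta.bad (h : G.IsTheta D) : G.Bad D := by
  obtain ⟨u, w, es₁, es₂, es₃, vs₁, vs₂, vs₃, hu, hp1, hp2, hp3,
    h12, h13, h23, hv12, hv13, hv23, rfl⟩ := h
  set D := {e | e ∈ es₁ ∨ e ∈ es₂ ∨ e ∈ es₃} with hD
  have hsub12 : ∀ e, (e ∈ es₁ ∨ e ∈ es₂) → e ∈ D := by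
    intro e he; rcases he with he | he
    · exact Or.inl he
    · exact Or.inr (Or.inl he)
  have hA := theta_cycle hu hp1 hp2 h12 hv12
  have hB := theta_cycle hu hp1 hp3 h13 hv13
  refine ⟨_, _, hA.1, hB.1, ?_, u, u, hA.2, hB.2, reachable_refl G _ u⟩
  intro hEq
  obtain ⟨e, he⟩ := List.exists_mem_of_ne_nil es₂ (hp2.1.ne_nil hu)
  have he1 : e ∈ ({e | e ∈ es₁ ∨ e ∈ es₂} : Set E) := Or.inr he
  rw [hEq] at he1
  rcases he1 with h' | h'
  · exact h12 e ⟨h', he⟩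
  · exact h23 e ⟨he, h'⟩

end Multigraph
namespace Multigraph

attribute [local instance 10] Classical.propDecidable

variable {V E : Type*} {G : Multigraph V E} {I J D S : Set E} {u v w x y : V}
  {e f : E} {es : List E} {vs : List V}

theorem sym2_exists_eq (z : Sym2 V) : ∃ a b, z = s(a, b) :=
  Sym2.ind (fun a b => ⟨a, b, rfl⟩) z

theorem degree_empty (G : Multigraph V E) (v : V) : G.degree ∅ v = 0 := by
  simp [degree]

theorem degree_eq_zero (hv : v ∉ G.verts D) : G.degree D v = 0 := by
  have h1 : {e ∈ D | v ∈ G.inc e} = ∅ := by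
    ext e; simp only [Set.mem_setOf_eq, Set.mem_empty_iff_false, iff_false, not_and]
    intro he hve; exact hv ⟨e, he, hve⟩
  have h2 : {e ∈ D | G.inc e = s(v, v)} = ∅ := by
    ext e; simp only [Set.mem_setOf_eq, Set.mem_empty_iff_false, iff_false, not_and]
    intro he hve; exact hv ⟨e, he, by rw [hve]; simp⟩
  simp [degree, h1, h2]

theorem degree_mono (h : S ⊆ D) (hD : D.Finite) : G.degree S v ≤ G.degree D v := by
  unfold degree
  have h1 : {e ∈ S | v ∈ G.inc e} ⊆ {e ∈ D | v ∈ G.inc e} :=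
    fun e ⟨he, hv⟩ => ⟨h he, hv⟩
  have h2 : {e ∈ S | G.inc e = s(v, v)} ⊆ {e ∈ D | G.inc e = s(v, v)} :=
    fun e ⟨he, hv⟩ => ⟨h he, hv⟩
  exact Nat.add_le_add
    (Set.ncard_le_ncard h1 (hD.subset (fun e he => he.1)))
    (Set.ncard_le_ncard h2 (hD.subset (fun e he => he.1)))

theorem degree_insert (he : e ∉ D) (hD : D.Finite) (v : V) :
    G.degree (insert e D) v = G.degree D v +
      ((if v ∈ G.inc e then 1 else 0) + (if G.inc e = s(v, v) then 1 else 0)) := by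
  unfold degree
  have key : ∀ (P : E → Prop), {f ∈ insert e D | P f} =
      if P e then insert e {f ∈ D | P f} else {f ∈ D | P f} := by
    intro P
    by_cases hP : P e <;> simp only [hP, if_true, if_false] <;> ext f <;>
      simp only [Set.mem_setOf_eq, Set.mem_insert_iff] <;> constructor
    · rintro ⟨rfl | hf, hPf⟩
      · exact Or.inl rfl
      · exact Or.inr ⟨hf, hPf⟩
    · rintro (rfl | ⟨hf, hPf⟩)
      · exact ⟨Or.inl rfl, hP⟩
      · exact ⟨Or.inr hf, hPf⟩
    · rintro ⟨rfl | hf, hPf⟩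
      · exact absurd hPf hP
      · exact ⟨hf, hPf⟩
    · rintro ⟨hf, hPf⟩
      exact ⟨Or.inr hf, hPf⟩
  rw [key (fun f => v ∈ G.inc f), key (fun f => G.inc f = s(v, v))]
  have hfin1 : {f ∈ D | v ∈ G.inc f}.Finite := hD.subset fun f hf => hf.1
  have hfin2 : {f ∈ D | G.inc f = s(v, v)}.Finite := hD.subset fun f hf => hf.1
  have hne1 : e ∉ {f ∈ D | v ∈ G.inc f} := fun hh => he hh.1
  have hne2 : e ∉ {f ∈ D | G.inc f = s(v, v)} := fun hh => he hh.1
  by_cases h2 : G.inc e = s(v, v)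
  · have h1 : v ∈ G.inc e := by rw [h2]; simp
    rw [if_pos h1, if_pos h2, if_pos h1, if_pos h2,
      Set.ncard_insert_of_notMem hne1 hfin1, Set.ncard_insert_of_notMem hne2 hfin2]
    omega
  · by_cases h1 : v ∈ G.inc e
    · rw [if_pos h1, if_neg h2, if_pos h1, if_neg h2,
        Set.ncard_insert_of_notMem hne1 hfin1]
      omega
    · rw [if_neg h1, if_neg h2, if_neg h1, if_neg h2]
      omega

theorem sum_degree (T : Finset V) : ∀ (D : Set E), D.Finite → G.verts D ⊆ ↑T →
    ∑ v ∈ T, G.degree D v = 2 * D.ncard := by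
  intro D hD
  refine Set.Finite.induction_on D hD ?_ ?_
  · intro _; simp [degree_empty]
  · intro e D' heD' hD' ih hT
    have hT' : G.verts D' ⊆ ↑T := fun z hz => hT (verts_mono (Set.subset_insert _ _) hz)
    have hsum : ∑ v ∈ T, G.degree (insert e D') v =
        (∑ v ∈ T, G.degree D' v) +
          ∑ v ∈ T, ((if v ∈ G.inc e then 1 else 0) + (if G.inc e = s(v, v) then 1 else 0)) := by
      rw [← Finset.sum_add_distrib]
      exact Finset.sum_congr rfl fun v _ => degree_insert heD' hD' v
    obtain ⟨a, b, hab⟩ := sym2_exists_eq (G.inc e)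
    have haT : a ∈ T := hT ⟨e, Set.mem_insert _ _, by rw [hab]; simp⟩
    have hbT : b ∈ T := hT ⟨e, Set.mem_insert _ _, by rw [hab]; simp⟩
    have h2 : ∑ v ∈ T, ((if v ∈ G.inc e then 1 else 0) +
        (if G.inc e = s(v, v) then 1 else 0)) = 2 := by
      by_cases hloop : a = b
      · subst hloop
        have hpt : ∀ v, ((if v ∈ G.inc e then 1 else 0) +
            (if G.inc e = s(v, v) then 1 else 0)) = if v = a then 2 else 0 := by
          intro v
          rw [hab]
          by_cases hva : v = a
          · rw [if_pos (Sym2.mem_iff.2 (Or.inl hva)), if_pos (by rw [hva]), if_pos hva]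
          · have hm : ¬ v ∈ s(a, a) := by rw [Sym2.mem_iff]; rintro (h | h) <;> exact hva h
            have hq : ¬ s(a, a) = s(v, v) := by
              rw [Sym2.eq_iff]
              rintro (⟨ha1, ha2⟩ | ⟨ha1, ha2⟩) <;> exact hva ha1.symm
            rw [if_neg hm, if_neg hq, if_neg hva]
        rw [Finset.sum_congr rfl fun v _ => hpt v]
        rw [Finset.sum_ite_eq' T a (fun _ => 2), if_pos haT]
      · have hpt : ∀ v, ((if v ∈ G.inc e then 1 else 0) +
            (if G.inc e = s(v, v) then 1 else 0)) =
            (if v = a then 1 else 0) + (if v = b then 1 else 0) := by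
          intro v
          have hnl : ¬ s(a, b) = s(v, v) := by
            rw [Sym2.eq_iff]
            rintro (⟨h1, h2⟩ | ⟨h1, h2⟩) <;> exact hloop (h1.trans h2.symm)
          rw [hab, if_neg hnl]
          by_cases hva : v = a
          · have hvb : ¬ v = b := fun hh => hloop (hva.symm.trans hh)
            rw [if_pos (Sym2.mem_iff.2 (Or.inl hva)), if_pos hva, if_neg hvb]
          · by_cases hvb : v = b
            · rw [if_pos (Sym2.mem_iff.2 (Or.inr hvb)), if_neg hva, if_pos hvb]
            · have hm : ¬ v ∈ s(a, b) := by
                rw [Sym2.mem_iff]; rintro (h | h); exacts [hva h, hvb h]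
              rw [if_neg hm, if_neg hva, if_neg hvb]
        rw [Finset.sum_congr rfl fun v _ => hpt v, Finset.sum_add_distrib]
        rw [Finset.sum_ite_eq' T a (fun _ => 1), Finset.sum_ite_eq' T b (fun _ => 1)]
        rw [if_pos haT, if_pos hbT]
    rw [hsum, ih hT', h2, Set.ncard_insert_of_notMem heD' hD']
    ring

theorem two_le_degree (hD : D.Finite) (he : e ∈ D) (hf : f ∈ D) (hef : e ≠ f)
    (hve : v ∈ G.inc e) (hvf : v ∈ G.inc f) : 2 ≤ G.degree D v := by
  have hsub : {e, f} ⊆ {g ∈ D | v ∈ G.inc g} := by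
    rintro g (rfl | rfl)
    · exact ⟨he, hve⟩
    · exact ⟨hf, hvf⟩
  have h2 : 2 ≤ {g ∈ D | v ∈ G.inc g}.ncard := by
    rw [← Set.ncard_pair hef]
    exact Set.ncard_le_ncard hsub (hD.subset fun g hg => hg.1)
  exact le_trans h2 (Nat.le_add_right _ _)

theorem two_le_degree_loop (hD : D.Finite) (he : e ∈ D) (hl : G.inc e = s(v, v)) :
    2 ≤ G.degree D v := by
  have h1 : 0 < {g ∈ D | v ∈ G.inc g}.ncard :=
    (Set.ncard_pos (hD.subset fun g hg => hg.1)).2 ⟨e, he, by rw [hl]; simp⟩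
  have h2 : 0 < {g ∈ D | G.inc g = s(v, v)}.ncard :=
    (Set.ncard_pos (hD.subset fun g hg => hg.1)).2 ⟨e, he, hl⟩
  unfold degree
  omega

theorem degree_bump (hS : S ⊆ D) (hD : D.Finite) (he : e ∈ D) (heS : e ∉ S)
    (hv : v ∈ G.inc e) : G.degree S v + 1 ≤ G.degree D v := by
  have hfinS : {g ∈ S | v ∈ G.inc g}.Finite := (hD.subset hS).subset fun g hg => hg.1
  have hne : e ∉ {g ∈ S | v ∈ G.inc g} := fun hh => heS hh.1
  have h1 : insert e {g ∈ S | v ∈ G.inc g} ⊆ {g ∈ D | v ∈ G.inc g} := by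
    rintro g (rfl | ⟨hg, hvg⟩)
    · exact ⟨he, hv⟩
    · exact ⟨hS hg, hvg⟩
  have h2 : {g ∈ S | v ∈ G.inc g}.ncard + 1 ≤ {g ∈ D | v ∈ G.inc g}.ncard := by
    rw [← Set.ncard_insert_of_notMem hne hfinS]
    exact Set.ncard_le_ncard h1 (hD.subset fun g hg => hg.1)
  have h3 : {g ∈ S | G.inc g = s(v, v)}.ncard ≤ {g ∈ D | G.inc g = s(v, v)}.ncard :=
    Set.ncard_le_ncard (fun g ⟨hg, hvg⟩ => ⟨hS hg, hvg⟩) (hD.subset fun g hg => hg.1)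
  unfold degree
  omega

end Multigraph
namespace Multigraph

attribute [local instance 10] Classical.propDecidable

variable {V E : Type*} {G : Multigraph V E} {I J D S C : Set E} {u v w x y z : V}
  {e f : E} {es es₁ es₂ : List E} {vs vs₁ vs₂ : List V}

theorem verts_finite (hD : D.Finite) : (G.verts D).Finite := by
  have : G.verts D ⊆ ⋃ e ∈ D, {x | x ∈ G.inc e} := by
    rintro x ⟨e, he, hx⟩
    exact Set.mem_biUnion he hx
  refine Set.Finite.subset (Set.Finite.biUnion hD ?_) this
  intro e _
  obtain ⟨a, b, hab⟩ := sym2_exists_eq (G.inc e)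
  refine Set.Finite.subset ((Set.finite_singleton b).insert a) ?_
  intro x hx
  rw [Set.mem_setOf_eq, hab, Sym2.mem_iff] at hx
  rcases hx with rfl | rfl <;> simp

theorem IsWalk.first_inc (h : G.IsWalk I u (e :: es) vs) : u ∈ G.inc e := by
  cases h with
  | cons he hinc hw => rw [hinc]; simp

theorem IsWalkFrom.last_inc (h : G.IsWalkFrom I u es vs w) (hne : es ≠ []) :
    ∃ e ∈ es, w ∈ G.inc e := by
  have hrev := h.reverse
  cases hes : es.reverse with
  | nil => exact absurd (by simpa using hes) hne
  | cons r t =>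
    rw [hes] at hrev
    have : w ∈ G.inc r := hrev.1.first_inc
    exact ⟨r, by rw [← List.mem_reverse, hes]; exact List.mem_cons_self, this⟩

theorem IsCycle.degree_ge_two (h : G.IsCycle I v es vs) (hx : x ∈ vs) :
    2 ≤ G.degree {e | e ∈ es} x := by
  obtain ⟨es', vs', h', hpe, hpv⟩ := h.rotate hx
  have hset : {e | e ∈ es'} = {e | e ∈ es} := by
    ext a; exact ⟨fun ha => hpe.mem_iff.1 ha, fun ha => hpe.mem_iff.2 ha⟩
  rw [← hset]
  have hfin : {e | e ∈ es'}.Finite := es'.finite_toSet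
  cases hes' : es' with
  | nil => exact absurd (by simpa using hes') h'.2.1
  | cons e rest =>
    subst hes'
    have hinc1 : x ∈ G.inc e := h'.1.1.first_inc
    by_cases hrest : rest = []
    · subst hrest
      -- single edge: must be a loop at x
      have hvs' : ∃ b, vs' = [b] := by
        have hl := h'.1.1.length_eq
        cases vs' with
        | nil => simp at hl
        | cons b l =>
          cases l with
          | nil => exact ⟨b, rfl⟩
          | cons c m => simp at hl
      obtain ⟨b, hb⟩ := hvs'
      subst hb
      have hbx : b = x := by
        have := h'.1.2
        simpa using this
      subst hbx
      cases h'.1.1 with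
      | cons he hinc hw =>
        exact two_le_degree_loop hfin (List.mem_cons_self) hinc
    · -- at least two edges: first and last both incident to x
      obtain ⟨r, t, hrt⟩ : ∃ r t, rest.reverse = r :: t := by
        cases hre : rest.reverse with
        | nil => exact absurd (by simpa using hre) hrest
        | cons r t => exact ⟨r, t, rfl⟩
      have hrev := h'.1.reverse
      have hrevlist : (e :: rest).reverse = r :: (t ++ [e]) := by
        rw [List.reverse_cons, hrt]; rfl
      rw [hrevlist] at hrev
      have hinc2 : x ∈ G.inc r := hrev.1.first_inc
      have hrmem : r ∈ rest := by
        rw [← List.mem_reverse, hrt]; exact List.mem_cons_self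
      have hre : r ≠ e := by
        intro hh
        subst hh
        exact (List.nodup_cons.1 h'.2.2.1).1 hrmem
      exact two_le_degree hfin (List.mem_cons_self)
        (List.mem_cons_of_mem _ hrmem) hre.symm hinc1 hinc2

theorem IsPath.internal_degree_ge_two (h : G.IsPath I u es vs w)
    (hx : x ∈ vs.dropLast) : 2 ≤ G.degree {e | e ∈ es} x := by
  have hvs : vs ≠ [] := by
    intro hh; rw [hh] at hx; simp at hx
  have hxvs : x ∈ vs := (List.dropLast_sublist vs).mem hx
  obtain ⟨es₁, es₂, vs₁, vs₂, he, hv, hv1, hwf1, hwk2⟩ := h.1.1.split hxvs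
  have hfin : {e | e ∈ es}.Finite := es.finite_toSet
  have hnd : vs.Nodup := h.2.of_cons
  have hxw : x ≠ vs.getLast hvs := by
    intro hh
    exact getLast_not_mem_dropLast hvs hnd (hh ▸ hx)
  have hvs2 : vs₂ ≠ [] := by
    intro hh
    rw [hh, List.append_nil] at hv
    subst hv
    apply hxw
    rw [← hwf1.2, getLast_cons_eq hv1]
  have hes1 : es₁ ≠ [] := fun hh => hv1 (hwf1.1.nil_iff.1 hh)
  have hes2 : es₂ ≠ [] := fun hh => hvs2 (hwk2.nil_iff.1 hh)
  -- last edge of es₁ is incident to x via reversing the prefix walk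
  obtain ⟨r, t, hrt⟩ : ∃ r t, es₁.reverse = r :: t := by
    cases hre : es₁.reverse with
    | nil => exact absurd (by simpa using hre) hes1
    | cons r t => exact ⟨r, t, rfl⟩
  have hrev := hwf1.reverse
  rw [hrt] at hrev
  have hinc1 : x ∈ G.inc r := hrev.1.first_inc
  have hrmem : r ∈ es₁ := by rw [← List.mem_reverse, hrt]; exact List.mem_cons_self
  obtain ⟨g, t₂, hgt⟩ : ∃ g t₂, es₂ = g :: t₂ := by
    cases hes₂' : es₂ with
    | nil => exact absurd hes₂' hes2
    | cons g t₂ => exact ⟨g, t₂, rfl⟩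
  have hinc2 : x ∈ G.inc g := by
    rw [hgt] at hwk2
    exact hwk2.first_inc
  have hrg : r ≠ g := by
    intro hh
    have hndes : es.Nodup := h.edges_nodup
    rw [he] at hndes
    exact (List.nodup_append'.1 hndes).2.2 hrmem (by rw [hgt, ← hh]; exact List.mem_cons_self)
  refine two_le_degree hfin ?_ ?_ hrg hinc1 hinc2
  · rw [he]; exact List.mem_append_left _ hrmem
  · rw [he, hgt]; exact List.mem_append_right _ (List.mem_cons_self)

/-- The key structural properties shared by the three shapes. -/
def Shapely (G : Multigraph V E) (C : Set E) : Prop :=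
  C.Finite ∧ C.ncard = (G.verts C).ncard + 1 ∧ (∀ v ∈ G.verts C, 2 ≤ G.degree C v) ∧
    ∀ a ∈ G.verts C, ∀ b ∈ G.verts C, G.Reachable C a b

theorem fne_aux (hSC : S ⊆ C) (hw : G.IsWalk C u es vs) (hu : u ∈ G.verts S)
    (hf : f ∈ C) (hfS : f ∉ S) (hy : (u :: vs).getLast (by simp) ∈ G.inc f) :
    ∃ g z, g ∈ C ∧ g ∉ S ∧ z ∈ G.verts S ∧ z ∈ G.inc g := by
  induction hw generalizing f with
  | nil v => exact ⟨f, v, hf, hfS, by simpa using hu, by simpa using hy⟩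
  | @cons a b e es0 vs0 he hinc hw0 ih =>
    by_cases heS : e ∈ S
    · have hb : b ∈ G.verts S := ⟨e, heS, by rw [hinc]; simp⟩
      refine ih hb hf hfS ?_
      rw [← List.getLast_cons (l := b :: vs0) (by simp)]
      exact hy
    · exact ⟨e, a, he, heS, hu, by rw [hinc]; simp⟩

theorem Shapely.eq_of_subset (hC : G.Shapely C) (hS : G.Shapely S) (hSC : S ⊆ C) :
    S = C := by
  by_contra hne
  obtain ⟨hCfin, hCcard, hCdeg, hCconn⟩ := hC
  obtain ⟨hSfin, hScard, hSdeg, hSconn⟩ := hS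
  obtain ⟨f, hfC, hfS⟩ : ∃ f, f ∈ C ∧ f ∉ S := by
    by_contra hh
    push_neg at hh
    exact hne (Set.Subset.antisymm hSC hh)
  have hSne : S.Nonempty := by
    rw [← Set.ncard_pos hSfin]; omega
  obtain ⟨e₀, he₀⟩ := hSne
  obtain ⟨a₀, b₀, hab₀⟩ := sym2_exists_eq (G.inc e₀)
  have hu₀ : a₀ ∈ G.verts S := ⟨e₀, he₀, by rw [hab₀]; simp⟩
  obtain ⟨p, q, hpq⟩ := sym2_exists_eq (G.inc f)
  have hyC : p ∈ G.verts C := ⟨f, hfC, by rw [hpq]; simp⟩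
  have hu₀C : a₀ ∈ G.verts C := verts_mono hSC hu₀
  obtain ⟨es, vs, hwf⟩ := hCconn a₀ hu₀C p hyC
  obtain ⟨g, z, hgC, hgS, hzS, hzg⟩ := fne_aux hSC hwf.1 hu₀ hfC hfS
    (by rw [hwf.2, hpq]; simp)
  -- now the counting argument
  have hvfin : (G.verts C).Finite := verts_finite hCfin
  set T : Finset V := hvfin.toFinset with hT
  have hTC : G.verts C ⊆ ↑T := by rw [hT]; simp
  have hvS_sub : G.verts S ⊆ G.verts C := verts_mono hSC
  have hsumC : ∑ v ∈ T, G.degree C v = 2 * C.ncard := sum_degree T C hCfin hTC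
  have hsumS : ∑ v ∈ T, G.degree S v = 2 * S.ncard :=
    sum_degree T S (hCfin.subset hSC) (fun v hv => hTC (hvS_sub hv))
  have hzT : z ∈ T := by rw [hT]; simp; exact hvS_sub hzS
  have hpoint : ∀ v ∈ T, G.degree S v + ((if v = z then 1 else 0) +
      (if v ∈ G.verts S then 0 else 2)) ≤ G.degree C v := by
    intro v hvT
    have hvC : v ∈ G.verts C := by
      rw [hT] at hvT; simpa using hvT
    by_cases hvz : v = z
    · subst hvz
      rw [if_pos rfl, if_pos hzS]
      have := degree_bump hSC hCfin hgC hgS hzg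
      omega
    · rw [if_neg hvz]
      by_cases hvS : v ∈ G.verts S
      · rw [if_pos hvS]
        have := degree_mono (G := G) (v := v) hSC hCfin
        omega
      · rw [if_neg hvS]
        have h0 : G.degree S v = 0 := degree_eq_zero hvS
        have h2 := hCdeg v hvC
        omega
  have hsum_le : ∑ v ∈ T, (G.degree S v + ((if v = z then 1 else 0) +
      (if v ∈ G.verts S then 0 else 2))) ≤ ∑ v ∈ T, G.degree C v :=
    Finset.sum_le_sum hpoint
  rw [Finset.sum_add_distrib, Finset.sum_add_distrib] at hsum_le
  have hz1 : ∑ v ∈ T, (if v = z then 1 else 0) = 1 := by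
    rw [Finset.sum_ite_eq' T z (fun _ => 1), if_pos hzT]
  have hcard_split : (T.filter (fun v => v ∈ G.verts S)).card = (G.verts S).ncard := by
    have heq : T.filter (fun v => v ∈ G.verts S) = (hvfin.subset hvS_sub).toFinset := by
      ext v
      simp only [Finset.mem_filter, Set.Finite.mem_toFinset, hT]
      constructor
      · rintro ⟨_, h2⟩; exact h2
      · intro h2; exact ⟨hvS_sub h2, h2⟩
    rw [heq, ← Set.ncard_eq_toFinset_card _ (hvfin.subset hvS_sub)]
  have hz2 : ∑ v ∈ T, (if v ∈ G.verts S then 0 else 2) =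
      2 * (T.card - (G.verts S).ncard) := by
    rw [Finset.sum_ite, Finset.sum_const, Finset.sum_const]
    simp only [smul_eq_mul, mul_zero, zero_add]
    have hfilters := Finset.card_filter_add_card_filter_not
      (s := T) (p := fun v => v ∈ G.verts S)
    rw [hcard_split] at hfilters
    omega
  have hTcard : T.card = (G.verts C).ncard := (Set.ncard_eq_toFinset_card _ hvfin).symm
  have hvS_le : (G.verts S).ncard ≤ (G.verts C).ncard :=
    Set.ncard_le_ncard hvS_sub hvfin
  rw [hz1, hz2, hsumC, hsumS] at hsum_le
  rw [hCcard, hScard] at hsum_le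
  rw [hTcard] at hsum_le
  omega

end Multigraph
namespace Multigraph

attribute [local instance 10] Classical.propDecidable

variable {V E : Type*} {G : Multigraph V E} {I J D S C C₁ C₂ : Set E} {u v w x y z : V}
  {e f : E} {es es₁ es₂ : List E} {vs vs₁ vs₂ : List V}

theorem list_set_ncard (hnd : es.Nodup) : {e | e ∈ es}.ncard = es.length := by
  rw [show {e | e ∈ es} = (↑es.toFinset : Set E) by rw [List.coe_toFinset],
    Set.ncard_coe_finset, List.toFinset_card_of_nodup hnd]

theorem list_set_ncard_v (hnd : vs.Nodup) : {y | y ∈ vs}.ncard = vs.length := by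
  rw [show {y | y ∈ vs} = (↑vs.toFinset : Set V) by rw [List.coe_toFinset],
    Set.ncard_coe_finset, List.toFinset_card_of_nodup hnd]

theorem IsWalk.reachable_of_mem (h : G.IsWalk I u es vs) (hy : y ∈ u :: vs) :
    G.Reachable {e | e ∈ es} u y := by
  induction h with
  | nil v =>
    rcases List.mem_cons.1 hy with rfl | hy
    · exact reachable_refl G _ _
    · simp at hy
  | @cons a b e es0 vs0 he hinc hw ih =>
    rcases List.mem_cons.1 hy with rfl | hy
    · exact reachable_refl G _ _
    · have hstep : G.Reachable {e' | e' ∈ e :: es0} a b :=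
        ⟨[e], [b], ⟨.cons (List.mem_cons_self) hinc (.nil b), rfl⟩⟩
      have hrest : G.Reachable {e' | e' ∈ es0} b y := ih hy
      exact hstep.trans (hrest.mono (fun e' he' => List.mem_cons_of_mem _ he'))

theorem IsCycleIn.finite (h : G.IsCycleIn I C) : C.Finite := by
  obtain ⟨v, es, vs, hc, rfl⟩ := h
  exact es.finite_toSet

theorem IsCycleIn.ncard_eq (h : G.IsCycleIn I C) : C.ncard = (G.verts C).ncard := by
  obtain ⟨v, es, vs, hc, rfl⟩ := h
  rw [list_set_ncard hc.2.2.1, hc.verts_eq, list_set_ncard_v hc.2.2.2, hc.1.1.length_eq]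

theorem IsCycleIn.degree_ge_two (h : G.IsCycleIn I C) (hv : v ∈ G.verts C) :
    2 ≤ G.degree C v := by
  obtain ⟨b, es, vs, hc, rfl⟩ := h
  rw [hc.verts_eq] at hv
  exact hc.degree_ge_two hv

theorem IsCycleIn.reachable (h : G.IsCycleIn I C) (ha : v ∈ G.verts C)
    (hb : w ∈ G.verts C) : G.Reachable C v w := by
  obtain ⟨b, es, vs, hc, rfl⟩ := h
  rw [hc.verts_eq] at ha hb
  have h1 : G.Reachable {e | e ∈ es} b v :=
    hc.1.1.reachable_of_mem (List.mem_cons_of_mem _ ha)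
  have h2 : G.Reachable {e | e ∈ es} b w :=
    hc.1.1.reachable_of_mem (List.mem_cons_of_mem _ hb)
  exact h1.symm.trans h2

theorem disjoint_edges_of_disjoint_verts (h : Disjoint (G.verts C₁) (G.verts C₂)) :
    Disjoint C₁ C₂ := by
  rw [Set.disjoint_left]
  intro e he1 he2
  obtain ⟨a, b, hab⟩ := sym2_exists_eq (G.inc e)
  have h1 : a ∈ G.verts C₁ := ⟨e, he1, by rw [hab]; simp⟩
  have h2 : a ∈ G.verts C₂ := ⟨e, he2, by rw [hab]; simp⟩
  exact Set.disjoint_left.1 h h1 h2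

theorem IsFigureEight.shapely (h : G.IsFigureEight D) : G.Shapely D := by
  obtain ⟨C₁, C₂, h1, h2, hdisj, ⟨w, hw⟩, rfl⟩ := h
  have hf1 := h1.finite
  have hf2 := h2.finite
  have hvf1 := verts_finite (G := G) hf1
  have hvf2 := verts_finite (G := G) hf2
  have hfin : (C₁ ∪ C₂).Finite := hf1.union hf2
  refine ⟨hfin, ?_, ?_, ?_⟩
  · rw [Set.ncard_union_eq hdisj hf1 hf2, verts_union]
    have hinter := Set.ncard_union_add_ncard_inter (G.verts C₁) (G.verts C₂) hvf1 hvf2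
    rw [hw, Set.ncard_singleton] at hinter
    have hv1pos : 0 < (G.verts C₁).ncard := (Set.ncard_pos hvf1).2 h1.verts_nonempty
    rw [h1.ncard_eq, h2.ncard_eq]
    omega
  · intro v hv
    rw [verts_union] at hv
    rcases hv with hv | hv
    · exact le_trans (h1.degree_ge_two hv) (degree_mono Set.subset_union_left hfin)
    · exact le_trans (h2.degree_ge_two hv) (degree_mono Set.subset_union_right hfin)
  · have hwmem : w ∈ G.verts C₁ ∩ G.verts C₂ := hw ▸ Set.mem_singleton w
    have key : ∀ a ∈ G.verts (C₁ ∪ C₂), G.Reachable (C₁ ∪ C₂) a w := by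
      intro a ha
      rw [verts_union] at ha
      rcases ha with ha | ha
      · exact (h1.reachable ha hwmem.1).mono Set.subset_union_left
      · exact (h2.reachable ha hwmem.2).mono Set.subset_union_right
    intro a ha b hb
    exact (key a ha).trans (key b hb).symm

end Multigraph
namespace Multigraph

attribute [local instance 10] Classical.propDecidable

variable {V E : Type*} {G : Multigraph V E} {I J D S C C₁ C₂ : Set E} {u v w x y z : V}
  {e f : E} {es es₁ es₂ : List E} {vs vs₁ vs₂ : List V}

theorem IsWalk.verts_eq' (h : G.IsWalk I u es vs) (hne : es ≠ []) :
    G.verts {e | e ∈ es} = {y | y ∈ u :: vs} := by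
  apply Set.Subset.antisymm h.verts_subset
  intro y hy
  rcases List.mem_cons.1 hy with rfl | hy
  · exact h.head_mem_verts hne
  · exact h.vs_subset_verts y hy

theorem IsDumbbell.shapely (h : G.IsDumbbell D) : G.Shapely D := by
  obtain ⟨C₁, C₂, u, w, es, vs, h1, h2, hdisj, hpath, hne, hu, hw, hint, hedge, rfl⟩ := h
  set P : Set E := {e | e ∈ es} with hPdef
  have hf1 := h1.finite
  have hf2 := h2.finite
  have hfP : P.Finite := es.finite_toSet
  have hfin : (C₁ ∪ C₂ ∪ P).Finite := (hf1.union hf2).union hfP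
  have hvf1 := verts_finite (G := G) hf1
  have hvf2 := verts_finite (G := G) hf2
  have hvs_ne : vs ≠ [] := fun hh => hne (hpath.1.1.nil_iff.2 hh)
  have hnd : (u :: vs).Nodup := hpath.2
  have hndvs : vs.Nodup := hnd.of_cons
  have hlastw : vs.getLast hvs_ne = w := by
    have := hpath.1.2
    rwa [getLast_cons_eq hvs_ne] at this
  have hvertsP : G.verts P = {y | y ∈ u :: vs} := hpath.1.1.verts_eq' hne
  have hC1sub : C₁ ⊆ C₁ ∪ C₂ ∪ P := Set.subset_union_left.trans Set.subset_union_left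
  have hC2sub : C₂ ⊆ C₁ ∪ C₂ ∪ P := Set.subset_union_right.trans Set.subset_union_left
  have hPsub : P ⊆ C₁ ∪ C₂ ∪ P := Set.subset_union_right
  set M : Set V := {y | y ∈ vs.dropLast} with hMdef
  have hMsub : ∀ y ∈ vs.dropLast, y ∈ vs := fun y hy => (List.dropLast_sublist vs).mem hy
  have hvertsD : G.verts (C₁ ∪ C₂ ∪ P) = (G.verts C₁ ∪ G.verts C₂) ∪ M := by
    rw [verts_union, verts_union]
    apply Set.Subset.antisymm
    · rintro a (ha | ha)
      · exact Or.inl ha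
      · rw [hvertsP] at ha
        rcases List.mem_cons.1 ha with rfl | ha
        · exact Or.inl (Or.inl hu)
        · rcases mem_dropLast_or_getLast hvs_ne ha with h' | h'
          · exact Or.inr h'
          · rw [h', hlastw]
            exact Or.inl (Or.inr hw)
    · rintro a (ha | ha)
      · exact Or.inl ha
      · refine Or.inr ?_
        rw [hvertsP]
        exact List.mem_cons_of_mem _ (hMsub a ha)
  have hMdisj : Disjoint (G.verts C₁ ∪ G.verts C₂) M := by
    rw [Set.disjoint_right]
    intro a ha
    exact hint a ha
  have hedisj12 : Disjoint C₁ C₂ := disjoint_edges_of_disjoint_verts hdisj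
  have hedisjP : Disjoint (C₁ ∪ C₂) P := by
    rw [Set.disjoint_right]
    intro e he
    exact hedge e he
  have hL : vs.length = es.length := hpath.1.1.length_eq
  have hLpos : 1 ≤ es.length := by
    cases es with
    | nil => exact absurd rfl hne
    | cons a l => simp
  refine ⟨hfin, ?_, ?_, ?_⟩
  · rw [Set.ncard_union_eq hedisjP (hf1.union hf2) hfP,
      Set.ncard_union_eq hedisj12 hf1 hf2, hvertsD,
      Set.ncard_union_eq hMdisj (hvf1.union hvf2) (vs.dropLast.finite_toSet),
      Set.ncard_union_eq hdisj hvf1 hvf2]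
    have hMcard : M.ncard = vs.length - 1 := by
      rw [hMdef, list_set_ncard_v (hndvs.sublist (List.dropLast_sublist vs)),
        List.length_dropLast]
    have hPcard : P.ncard = es.length := list_set_ncard hpath.edges_nodup
    rw [hMcard, hPcard, h1.ncard_eq, h2.ncard_eq]
    omega
  · intro a ha
    rw [hvertsD] at ha
    rcases ha with (ha | ha) | ha
    · exact le_trans (h1.degree_ge_two ha) (degree_mono hC1sub hfin)
    · exact le_trans (h2.degree_ge_two ha) (degree_mono hC2sub hfin)
    · exact le_trans (hpath.internal_degree_ge_two ha) (degree_mono hPsub hfin)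
  · have hreachPuw : G.Reachable (C₁ ∪ C₂ ∪ P) u w := ⟨es, vs, hpath.1⟩
    have key : ∀ a ∈ G.verts (C₁ ∪ C₂ ∪ P), G.Reachable (C₁ ∪ C₂ ∪ P) a u := by
      intro a ha
      rw [hvertsD] at ha
      rcases ha with (ha | ha) | ha
      · exact (h1.reachable ha hu).mono hC1sub
      · exact ((h2.reachable ha hw).mono hC2sub).trans hreachPuw.symm
      · have : G.Reachable P u a := hpath.1.1.reachable_of_mem
          (List.mem_cons_of_mem _ (hMsub a ha))
        exact (this.mono hPsub).symm
    intro a ha b hb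
    exact (key a ha).trans (key b hb).symm

theorem IsTheta.shapely (h : G.IsTheta D) : G.Shapely D := by
  obtain ⟨u, w, es₁, es₂, es₃, vs₁, vs₂, vs₃, hu, hp1, hp2, hp3,
    h12, h13, h23, hv12, hv13, hv23, rfl⟩ := h
  set P₁ : Set E := {e | e ∈ es₁} with hP1
  set P₂ : Set E := {e | e ∈ es₂} with hP2
  set P₃ : Set E := {e | e ∈ es₃} with hP3
  have hDeq : {e | e ∈ es₁ ∨ e ∈ es₂ ∨ e ∈ es₃} = P₁ ∪ (P₂ ∪ P₃) := by
    ext a; simp [hP1, hP2, hP3, Set.mem_union]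
  rw [hDeq]
  have hne1 : es₁ ≠ [] := hp1.1.ne_nil hu
  have hne2 : es₂ ≠ [] := hp2.1.ne_nil hu
  have hne3 : es₃ ≠ [] := hp3.1.ne_nil hu
  have hvne1 : vs₁ ≠ [] := fun hh => hne1 (hp1.1.1.nil_iff.2 hh)
  have hvne2 : vs₂ ≠ [] := fun hh => hne2 (hp2.1.1.nil_iff.2 hh)
  have hvne3 : vs₃ ≠ [] := fun hh => hne3 (hp3.1.1.nil_iff.2 hh)
  have hlast1 : vs₁.getLast hvne1 = w := by
    have := hp1.1.2; rwa [getLast_cons_eq hvne1] at this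
  have hlast2 : vs₂.getLast hvne2 = w := by
    have := hp2.1.2; rwa [getLast_cons_eq hvne2] at this
  have hlast3 : vs₃.getLast hvne3 = w := by
    have := hp3.1.2; rwa [getLast_cons_eq hvne3] at this
  have hnd1 : vs₁.Nodup := hp1.2.of_cons
  have hnd2 : vs₂.Nodup := hp2.2.of_cons
  have hnd3 : vs₃.Nodup := hp3.2.of_cons
  have hu1 : u ∉ vs₁ := (List.nodup_cons.1 hp1.2).1
  have hu2 : u ∉ vs₂ := (List.nodup_cons.1 hp2.2).1
  have hu3 : u ∉ vs₃ := (List.nodup_cons.1 hp3.2).1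
  set D : Set E := P₁ ∪ (P₂ ∪ P₃) with hD
  have hsub1 : P₁ ⊆ D := Set.subset_union_left
  have hsub2 : P₂ ⊆ D := Set.subset_union_left.trans Set.subset_union_right
  have hsub3 : P₃ ⊆ D := Set.subset_union_right.trans Set.subset_union_right
  have hfin : D.Finite := (es₁.finite_toSet.union (es₂.finite_toSet.union es₃.finite_toSet))
  have hv1 : G.verts P₁ = {y | y ∈ u :: vs₁} := hp1.1.1.verts_eq' hne1
  have hv2 : G.verts P₂ = {y | y ∈ u :: vs₂} := hp2.1.1.verts_eq' hne2
  have hv3 : G.verts P₃ = {y | y ∈ u :: vs₃} := hp3.1.1.verts_eq' hne3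
  set M₁ : Set V := {y | y ∈ vs₁.dropLast} with hM1
  set M₂ : Set V := {y | y ∈ vs₂.dropLast} with hM2
  set M₃ : Set V := {y | y ∈ vs₃.dropLast} with hM3
  have hMsub1 : ∀ y ∈ vs₁.dropLast, y ∈ vs₁ := fun y hy => (List.dropLast_sublist vs₁).mem hy
  have hMsub2 : ∀ y ∈ vs₂.dropLast, y ∈ vs₂ := fun y hy => (List.dropLast_sublist vs₂).mem hy
  have hMsub3 : ∀ y ∈ vs₃.dropLast, y ∈ vs₃ := fun y hy => (List.dropLast_sublist vs₃).mem hy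
  have hsplit : ∀ (vsi : List V) (hne : vsi ≠ []), vsi.getLast hne = w →
      ∀ y ∈ vsi, y ∈ vsi.dropLast ∨ y = w := by
    intro vsi hne' hlast y hy
    rcases mem_dropLast_or_getLast hne' hy with h' | h'
    · exact Or.inl h'
    · exact Or.inr (h' ▸ hlast ▸ rfl)
  have hvertsD : G.verts D = {u} ∪ ({w} ∪ (M₁ ∪ (M₂ ∪ M₃))) := by
    rw [hD, verts_union, verts_union, hv1, hv2, hv3]
    apply Set.Subset.antisymm
    · rintro a (ha | ha | ha)
      · rcases List.mem_cons.1 ha with rfl | ha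
        · exact Or.inl rfl
        · rcases hsplit vs₁ hvne1 hlast1 a ha with h' | rfl
          · exact Or.inr (Or.inr (Or.inl h'))
          · exact Or.inr (Or.inl rfl)
      · rcases List.mem_cons.1 ha with rfl | ha
        · exact Or.inl rfl
        · rcases hsplit vs₂ hvne2 hlast2 a ha with h' | rfl
          · exact Or.inr (Or.inr (Or.inr (Or.inl h')))
          · exact Or.inr (Or.inl rfl)
      · rcases List.mem_cons.1 ha with rfl | ha
        · exact Or.inl rfl
        · rcases hsplit vs₃ hvne3 hlast3 a ha with h' | rfl
          · exact Or.inr (Or.inr (Or.inr (Or.inr h')))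
          · exact Or.inr (Or.inl rfl)
    · rintro a (rfl | rfl | ha | ha | ha)
      · exact Or.inl (List.mem_cons_self)
      · exact Or.inl (List.mem_cons_of_mem _ (hlast1 ▸ List.getLast_mem hvne1))
      · exact Or.inl (List.mem_cons_of_mem _ (hMsub1 a ha))
      · exact Or.inr (Or.inl (List.mem_cons_of_mem _ (hMsub2 a ha)))
      · exact Or.inr (Or.inr (List.mem_cons_of_mem _ (hMsub3 a ha)))
  have hL1 : vs₁.length = es₁.length := hp1.1.1.length_eq
  have hL2 : vs₂.length = es₂.length := hp2.1.1.length_eq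
  have hL3 : vs₃.length = es₃.length := hp3.1.1.length_eq
  have hLpos1 : 1 ≤ es₁.length := by cases es₁ with
    | nil => exact absurd rfl hne1
    | cons a l => simp
  have hLpos2 : 1 ≤ es₂.length := by cases es₂ with
    | nil => exact absurd rfl hne2
    | cons a l => simp
  have hLpos3 : 1 ≤ es₃.length := by cases es₃ with
    | nil => exact absurd rfl hne3
    | cons a l => simp
  have hwM1 : w ∉ M₁ := fun hh => getLast_not_mem_dropLast hvne1 hnd1 (hlast1 ▸ hh)
  have hwM2 : w ∉ M₂ := fun hh => getLast_not_mem_dropLast hvne2 hnd2 (hlast2 ▸ hh)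
  have hwM3 : w ∉ M₃ := fun hh => getLast_not_mem_dropLast hvne3 hnd3 (hlast3 ▸ hh)
  have huM : u ∉ {w} ∪ (M₁ ∪ (M₂ ∪ M₃)) := by
    rintro (rfl | ha | ha | ha)
    · exact hu rfl
    · exact hu1 (hMsub1 u ha)
    · exact hu2 (hMsub2 u ha)
    · exact hu3 (hMsub3 u ha)
  have hwMs : w ∉ M₁ ∪ (M₂ ∪ M₃) := by
    rintro (ha | ha | ha)
    exacts [hwM1 ha, hwM2 ha, hwM3 ha]
  have hM12 : Disjoint M₁ (M₂ ∪ M₃) := by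
    rw [Set.disjoint_left]
    rintro a ha (ha' | ha')
    · exact hv12 a ⟨ha, ha'⟩
    · exact hv13 a ⟨ha, ha'⟩
  have hM23 : Disjoint M₂ M₃ := by
    rw [Set.disjoint_left]
    intro a ha ha'
    exact hv23 a ⟨ha, ha'⟩
  have hE12 : Disjoint P₁ (P₂ ∪ P₃) := by
    rw [Set.disjoint_left]
    rintro a ha (ha' | ha')
    · exact h12 a ⟨ha, ha'⟩
    · exact h13 a ⟨ha, ha'⟩
  have hE23 : Disjoint P₂ P₃ := by
    rw [Set.disjoint_left]
    intro a ha ha'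
    exact h23 a ⟨ha, ha'⟩
  refine ⟨hfin, ?_, ?_, ?_⟩
  · rw [hD, Set.ncard_union_eq hE12 es₁.finite_toSet
      (es₂.finite_toSet.union es₃.finite_toSet),
      Set.ncard_union_eq hE23 es₂.finite_toSet es₃.finite_toSet, ← hD, hvertsD]
    have hMf1 : M₁.Finite := vs₁.dropLast.finite_toSet
    have hMf2 : M₂.Finite := vs₂.dropLast.finite_toSet
    have hMf3 : M₃.Finite := vs₃.dropLast.finite_toSet
    rw [Set.ncard_union_eq (Set.disjoint_left.2 (by rintro a rfl; exact huM))
        (Set.finite_singleton u) ((Set.finite_singleton w).union (hMf1.union (hMf2.union hMf3))),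
      Set.ncard_union_eq (Set.disjoint_left.2 (by rintro a rfl; exact hwMs))
        (Set.finite_singleton w) (hMf1.union (hMf2.union hMf3)),
      Set.ncard_union_eq hM12 hMf1 (hMf2.union hMf3),
      Set.ncard_union_eq hM23 hMf2 hMf3]
    have c1 : P₁.ncard = es₁.length := list_set_ncard hp1.edges_nodup
    have c2 : P₂.ncard = es₂.length := list_set_ncard hp2.edges_nodup
    have c3 : P₃.ncard = es₃.length := list_set_ncard hp3.edges_nodup
    have m1 : M₁.ncard = vs₁.length - 1 := by
      rw [hM1, list_set_ncard_v (hnd1.sublist (List.dropLast_sublist vs₁)),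
        List.length_dropLast]
    have m2 : M₂.ncard = vs₂.length - 1 := by
      rw [hM2, list_set_ncard_v (hnd2.sublist (List.dropLast_sublist vs₂)),
        List.length_dropLast]
    have m3 : M₃.ncard = vs₃.length - 1 := by
      rw [hM3, list_set_ncard_v (hnd3.sublist (List.dropLast_sublist vs₃)),
        List.length_dropLast]
    rw [c1, c2, c3, m1, m2, m3, Set.ncard_singleton, Set.ncard_singleton]
    omega
  · intro a ha
    rw [hvertsD] at ha
    rcases ha with rfl | rfl | ha | ha | ha
    · -- a = u
      obtain ⟨e₁, t₁, he₁⟩ : ∃ e₁ t₁, es₁ = e₁ :: t₁ := by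
        cases es₁ with
        | nil => exact absurd rfl hne1
        | cons e₁ t₁ => exact ⟨e₁, t₁, rfl⟩
      obtain ⟨e₂, t₂, he₂⟩ : ∃ e₂ t₂, es₂ = e₂ :: t₂ := by
        cases es₂ with
        | nil => exact absurd rfl hne2
        | cons e₂ t₂ => exact ⟨e₂, t₂, rfl⟩
      have hi1 : a ∈ G.inc e₁ := by
        have := hp1.1.1; rw [he₁] at this; exact this.first_inc
      have hi2 : a ∈ G.inc e₂ := by
        have := hp2.1.1; rw [he₂] at this; exact this.first_inc
      have hm1 : e₁ ∈ D := hsub1 (by rw [hP1, he₁]; exact List.mem_cons_self)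
      have hm2 : e₂ ∈ D := hsub2 (by rw [hP2, he₂]; exact List.mem_cons_self)
      have hne12 : e₁ ≠ e₂ := by
        intro hh
        exact h12 e₁ ⟨by rw [he₁]; exact List.mem_cons_self,
          by rw [he₂, hh]; exact List.mem_cons_self⟩
      exact two_le_degree hfin hm1 hm2 hne12 hi1 hi2
    · -- a = w
      obtain ⟨e₁, he₁m, hi1⟩ := hp1.1.last_inc hne1
      obtain ⟨e₂, he₂m, hi2⟩ := hp2.1.last_inc hne2
      have hne12 : e₁ ≠ e₂ := by
        intro hh
        exact h12 e₁ ⟨he₁m, hh ▸ he₂m⟩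
      exact two_le_degree hfin (hsub1 he₁m) (hsub2 he₂m) hne12 hi1 hi2
    · exact le_trans (hp1.internal_degree_ge_two ha) (degree_mono hsub1 hfin)
    · exact le_trans (hp2.internal_degree_ge_two ha) (degree_mono hsub2 hfin)
    · exact le_trans (hp3.internal_degree_ge_two ha) (degree_mono hsub3 hfin)
  · have key : ∀ a ∈ G.verts D, G.Reachable D a u := by
      intro a ha
      rw [hD, verts_union, verts_union] at ha
      rcases ha with ha | ha | ha
      · rw [hv1] at ha
        exact ((hp1.1.1.reachable_of_mem ha).mono hsub1).symm
      · rw [hv2] at ha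
        exact ((hp2.1.1.reachable_of_mem ha).mono hsub2).symm
      · rw [hv3] at ha
        exact ((hp3.1.1.reachable_of_mem ha).mono hsub3).symm
    intro a ha b hb
    exact (key a ha).trans (key b hb).symm

end Multigraph
namespace Multigraph

attribute [local instance 10] Classical.propDecidable

variable {V E : Type*} {G : Multigraph V E} {I J D S C Z Z₁ Z₂ : Set E} {u v w x y a b : V}
  {e f e₀ g : E} {es es₁ es₂ : List E} {vs vs₁ vs₂ : List V}

theorem trimmed_edge_excl {A B : Set V} (hAB : Disjoint A B)
    (hwf : G.IsWalkFrom I u es vs w) (hu : u ∈ A) (hw : w ∈ B)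
    (hint : ∀ x ∈ vs.dropLast, x ∉ A ∪ B)
    (hZ1 : ∀ g ∈ Z₁, ∀ y ∈ G.inc g, y ∈ A) (hZ2 : ∀ g ∈ Z₂, ∀ y ∈ G.inc g, y ∈ B) :
    ∀ g ∈ es, g ∉ Z₁ ∪ Z₂ := by
  intro g hg
  have hvs : vs ≠ [] := by
    intro hh
    rw [hwf.1.nil_iff.2 hh] at hg
    simp at hg
  have hlast : vs.getLast hvs = w := by
    have := hwf.2; rwa [getLast_cons_eq hvs] at this
  obtain ⟨t₁, t₂, ht⟩ := List.append_of_mem hg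
  obtain ⟨vs₁, p, q, vs₂, hv, hlen, hwf1, hince, hwk2, hnil, hmem⟩ :=
    hwf.1.split_edge t₁ g t₂ ht
  have hqinc : q ∈ G.inc g := by rw [hince]; simp
  have hpinc : p ∈ G.inc g := by rw [hince]; simp
  have hqvs : q ∈ vs := by rw [hv]; exact List.mem_append_right _ (List.mem_cons_self)
  rintro (hgZ | hgZ)
  · have hqA : q ∈ A := hZ1 g hgZ q hqinc
    rcases mem_dropLast_or_getLast hvs hqvs with h' | h'
    · exact hint q h' (Or.inl hqA)
    · rw [h', hlast] at hqA
      exact Set.disjoint_left.1 hAB hqA hw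
  · have hpB : p ∈ B := hZ2 g hgZ p hpinc
    by_cases hvs1 : vs₁ = []
    · rw [hnil hvs1] at hpB
      exact Set.disjoint_left.1 hAB hu hpB
    · have hpd : p ∈ vs.dropLast := by
        rw [hv, List.dropLast_append_cons]
        exact List.mem_append_left _ (hmem hvs1)
      exact hint p hpd (Or.inr hpB)

theorem scan_edge_excl {A : Set V} (hwf : G.IsWalkFrom I u es vs w)
    (hint : ∀ x ∈ vs.dropLast, x ∉ A)
    (hZ : ∀ g ∈ Z, ∀ y ∈ G.inc g, y ∈ A)
    (he₀ : e₀ ∈ es) (he₀Z : e₀ ∉ Z) :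
    ∀ g ∈ es, g ∉ Z := by
  intro g hg hgZ
  obtain ⟨t₁, t₂, ht⟩ := List.append_of_mem hg
  obtain ⟨vs₁, p, q, vs₂, hv, hlen, hwf1, hince, hwk2, hnil, hmem⟩ :=
    hwf.1.split_edge t₁ g t₂ ht
  have hqinc : q ∈ G.inc g := by rw [hince]; simp
  have hpinc : p ∈ G.inc g := by rw [hince]; simp
  by_cases hvs2 : vs₂ = []
  · by_cases hvs1 : vs₁ = []
    · -- single edge: es = [g], so g = e₀
      have ht1 : t₁ = [] := by
        apply List.length_eq_zero_iff.1
        rw [← hlen, hvs1]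
        rfl
      have hlv := hwf.1.length_eq
      rw [hv, hvs1, hvs2, ht, ht1] at hlv
      simp only [List.nil_append, List.length_cons, List.length_nil,
        List.length_append] at hlv
      have ht2 : t₂ = [] := List.length_eq_zero_iff.1 (by omega)
      rw [ht, ht1, ht2] at he₀
      simp at he₀
      subst he₀
      exact he₀Z hgZ
    · have hpd : p ∈ vs.dropLast := by
        rw [hv, hvs2, List.dropLast_append_cons]
        simpa using hmem hvs1
      exact hint p hpd (hZ g hgZ p hpinc)
  · have hqd : q ∈ vs.dropLast := by
      rw [hv, List.dropLast_append_cons, dropLast_cons_ne q hvs2]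
      exact List.mem_append_right _ (List.mem_cons_self)
    exact hint q hqd (hZ g hgZ q hqinc)

theorem connect_path_aux {A B : Set V} (hAB : Disjoint A B) :
    ∀ (n : ℕ) (es : List E) (vs : List V) (a b : V), es.length ≤ n →
    G.IsPath I a es vs b → a ∈ A → b ∈ B →
    ∃ u w es' vs', G.IsPath I u es' vs' w ∧ es' ≠ [] ∧ u ∈ A ∧ w ∈ B ∧
      (∀ x ∈ vs'.dropLast, x ∉ A ∪ B) ∧ (∀ e ∈ es', e ∈ es) := by
  intro n
  induction n with
  | zero =>
    intro es vs a b hlen h ha hb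
    have hab : a ≠ b := fun hh => Set.disjoint_left.1 hAB ha (hh ▸ hb)
    have := h.1.ne_nil hab
    cases es with
    | nil => exact absurd rfl this
    | cons e l => simp at hlen
  | succ n ih =>
    intro es vs a b hlen h ha hb
    have hab : a ≠ b := fun hh => Set.disjoint_left.1 hAB ha (hh ▸ hb)
    have hes : es ≠ [] := h.1.ne_nil hab
    have hvs : vs ≠ [] := fun hh => hes (h.1.1.nil_iff.2 hh)
    have hndv : vs.Nodup := h.2.of_cons
    have hlast : vs.getLast hvs = b := by
      have := h.1.2; rwa [getLast_cons_eq hvs] at this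
    by_cases hA : ∃ x, x ∈ vs.dropLast ∧ x ∈ A
    · obtain ⟨x, hx1, hx2⟩ := hA
      obtain ⟨es₁, es₂, vs₁, vs₂, he, hv, hv1, hwf1, hwk2⟩ :=
        h.1.1.split ((List.dropLast_sublist vs).mem hx1)
      have hxl : x = vs₁.getLast hv1 := by
        rw [← hwf1.2, getLast_cons_eq hv1]
      have hvs2 : vs₂ ≠ [] := by
        intro hh
        rw [hh, List.append_nil] at hv
        subst hv
        exact getLast_not_mem_dropLast hvs hndv ((hxl ▸ hx1 : vs.getLast hv1 ∈ vs.dropLast))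
      have hlast2 : (x :: vs₂).getLast (by simp) = b := by
        have h2 := h.1.2
        rw [hv, getLast_cons_append a x vs₁ vs₂ hwf1.2] at h2
        exact h2
      have hxvs1 : x ∈ vs₁ := by rw [hxl]; exact List.getLast_mem hv1
      have hpath2 : G.IsPath I x es₂ vs₂ b := by
        refine ⟨⟨hwk2, hlast2⟩, ?_⟩
        refine List.nodup_cons.2 ⟨?_, ?_⟩
        · intro hh
          rw [hv] at hndv
          exact (List.nodup_append'.1 hndv).2.2 hxvs1 hh
        · rw [hv] at hndv
          exact (List.nodup_append'.1 hndv).2.1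
      have hes1 : es₁ ≠ [] := fun hh => hv1 (hwf1.1.nil_iff.1 hh)
      have hlen2 : es₂.length ≤ n := by
        have h1 : es.length = es₁.length + es₂.length := by rw [he]; simp
        have h2 : 1 ≤ es₁.length := by
          cases es₁ with
          | nil => exact absurd rfl hes1
          | cons c l => simp
        omega
      obtain ⟨u, w, es', vs', hp, hne, hu, hw, hint, hsub⟩ := ih es₂ vs₂ x b hlen2 hpath2 hx2 hb
      exact ⟨u, w, es', vs', hp, hne, hu, hw, hint,
        fun e hee => by rw [he]; exact List.mem_append_right _ (hsub e hee)⟩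
    · by_cases hB : ∃ x, x ∈ vs.dropLast ∧ x ∈ B
      · obtain ⟨x, hx1, hx2⟩ := hB
        obtain ⟨es₁, es₂, vs₁, vs₂, he, hv, hv1, hwf1, hwk2⟩ :=
          h.1.1.split ((List.dropLast_sublist vs).mem hx1)
        have hxl : x = vs₁.getLast hv1 := by
          rw [← hwf1.2, getLast_cons_eq hv1]
        have hvs2 : vs₂ ≠ [] := by
          intro hh
          rw [hh, List.append_nil] at hv
          subst hv
          exact getLast_not_mem_dropLast hvs hndv ((hxl ▸ hx1 : vs.getLast hv1 ∈ vs.dropLast))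
        have hpath1 : G.IsPath I a es₁ vs₁ x := by
          refine ⟨hwf1, ?_⟩
          have : (a :: vs₁).Sublist (a :: vs) := by
            refine List.Sublist.cons₂ a ?_
            rw [hv]
            exact List.sublist_append_left vs₁ vs₂
          exact h.2.sublist this
        have hes2 : es₂ ≠ [] := fun hh => hvs2 (hwk2.nil_iff.1 hh)
        have hlen1 : es₁.length ≤ n := by
          have h1 : es.length = es₁.length + es₂.length := by rw [he]; simp
          have h2 : 1 ≤ es₂.length := by
            cases es₂ with
            | nil => exact absurd rfl hes2
            | cons c l => simp
          omega
        obtain ⟨u, w, es', vs', hp, hne, hu, hw, hint, hsub⟩ :=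
          ih es₁ vs₁ a x hlen1 hpath1 ha hx2
        exact ⟨u, w, es', vs', hp, hne, hu, hw, hint,
          fun e hee => by rw [he]; exact List.mem_append_left _ (hsub e hee)⟩
      · push_neg at hA hB
        refine ⟨a, b, es, vs, h, hes, ha, hb, ?_, fun e hee => hee⟩
        rintro x hx (hxA | hxB)
        · exact hA x hx hxA
        · exact hB x hx hxB

theorem connect_path {A B : Set V} (hAB : Disjoint A B) (ha : a ∈ A) (hb : b ∈ B)
    (hreach : G.Reachable I a b) :
    ∃ u w es vs, G.IsPath I u es vs w ∧ es ≠ [] ∧ u ∈ A ∧ w ∈ B ∧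
      (∀ x ∈ vs.dropLast, x ∉ A ∪ B) := by
  obtain ⟨es0, vs0, hwf⟩ := hreach
  obtain ⟨es1, vs1, hp, _, _⟩ := hwf.exists_path
  obtain ⟨u, w, es', vs', hp', hne, hu, hw, hint, _⟩ :=
    connect_path_aux hAB es1.length es1 vs1 a b le_rfl hp ha hb
  exact ⟨u, w, es', vs', hp', hne, hu, hw, hint⟩

end Multigraph
namespace Multigraph

attribute [local instance 10] Classical.propDecidable

variable {V E : Type*} {G : Multigraph V E} {I : Set E} {u v w x y a b : V}
  {e f e₀ g : E} {es es₁ es₂ : List E} {vs vs₁ vs₂ : List V}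

theorem scan_aux {A : Set V} {e₀ : E} :
    ∀ (n : ℕ) (es : List E) (vs : List V) (a b : V), es.length ≤ n →
    G.IsWalkFrom I a es vs b → (a :: vs.dropLast).Nodup → b ∉ vs.dropLast →
    a ∈ A → b ∈ A → e₀ ∈ es →
    (∃ a' b' es' vs', a' ∈ A ∧ b' ∈ A ∧ a' ≠ b' ∧ G.IsPath I a' es' vs' b' ∧
       e₀ ∈ es' ∧ (∀ e ∈ es', e ∈ es) ∧ (∀ t ∈ vs'.dropLast, t ∉ A)) ∨
    ((∀ t ∈ vs.dropLast, t ∉ A) ∧ a = b) := by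
  intro n
  induction n with
  | zero =>
    intro es vs a b hlen hwf hnd hbd ha hb he₀
    cases es with
    | nil => simp at he₀
    | cons e l => simp at hlen
  | succ n ih =>
    intro es vs a b hlen hwf hnd hbd ha hb he₀
    have hes : es ≠ [] := fun hh => by rw [hh] at he₀; simp at he₀
    have hvs : vs ≠ [] := fun hh => hes (hwf.1.nil_iff.2 hh)
    have hlastb : vs.getLast hvs = b := by
      have := hwf.2; rwa [getLast_cons_eq hvs] at this
    have hndrop : vs.dropLast.Nodup := hnd.of_cons
    have hna : a ∉ vs.dropLast := (List.nodup_cons.1 hnd).1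
    by_cases hA : ∃ t, t ∈ vs.dropLast ∧ t ∈ A
    · obtain ⟨t, htd, htA⟩ := hA
      obtain ⟨es₁, es₂, vs₁, vs₂, he, hv, hv1, hwf1, hwk2⟩ :=
        hwf.1.split ((List.dropLast_sublist vs).mem htd)
      have htl : t = vs₁.getLast hv1 := by
        rw [← hwf1.2, getLast_cons_eq hv1]
      have htb : t ≠ b := fun hh => hbd (hh ▸ htd)
      have hvs₂ : vs₂ ≠ [] := by
        intro hh
        rw [hh, List.append_nil] at hv
        subst hv
        exact htb (htl.trans hlastb)
      obtain ⟨c, l, hcl⟩ : ∃ c l, vs₂ = c :: l := by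
        cases hc : vs₂ with
        | nil => exact absurd hc hvs₂
        | cons c l => exact ⟨c, l, rfl⟩
      have hdrop : vs.dropLast = vs₁ ++ vs₂.dropLast := by
        rw [hv, hcl, List.dropLast_append_cons]
      have hndsplit := hdrop ▸ hndrop
      have hnd1 : vs₁.Nodup := (List.nodup_append'.1 hndsplit).1
      have hnd2 : vs₂.dropLast.Nodup := (List.nodup_append'.1 hndsplit).2.1
      have hdisj12 := (List.nodup_append'.1 hndsplit).2.2
      have htvs₁ : t ∈ vs₁ := by rw [htl]; exact List.getLast_mem hv1
      have hat : a ≠ t := by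
        intro hh
        exact hna (hh ▸ htd)
      have hes1 : es₁ ≠ [] := fun hh => hv1 (hwf1.1.nil_iff.1 hh)
      have hes2 : es₂ ≠ [] := fun hh => hvs₂ (hwk2.nil_iff.1 hh)
      have hlen1 : 1 ≤ es₁.length := by
        cases es₁ with
        | nil => exact absurd rfl hes1
        | cons d m => simp
      have hlen2 : 1 ≤ es₂.length := by
        cases es₂ with
        | nil => exact absurd rfl hes2
        | cons d m => simp
      have hlentot : es.length = es₁.length + es₂.length := by rw [he]; simp
      rcases List.mem_append.1 (he ▸ he₀) with h0 | h0
      · -- recurse on prefix a → t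
        have hinv1 : (a :: vs₁.dropLast).Nodup := by
          refine hnd.sublist (List.Sublist.cons₂ a ?_)
          rw [hdrop]
          exact ((List.dropLast_sublist vs₁).trans (List.sublist_append_left vs₁ _))
        have hinv2 : t ∉ vs₁.dropLast := by
          rw [htl]
          exact getLast_not_mem_dropLast hv1 hnd1
        obtain hres | hres := ih es₁ vs₁ a t (by omega) hwf1 hinv1 hinv2 ha htA h0
        · obtain ⟨a', b', es', vs', p1, p2, p3, p4, p5, p6, p7⟩ := hres
          exact Or.inl ⟨a', b', es', vs', p1, p2, p3, p4, p5,
            fun e hee => by rw [he]; exact List.mem_append_left _ (p6 e hee), p7⟩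
        · exact absurd hres.2 hat
      · -- recurse on suffix t → b
        have hlast2 : (t :: vs₂).getLast (by simp) = b := by
          have h2 := hwf.2
          rw [hv, getLast_cons_append a t vs₁ vs₂ hwf1.2] at h2
          exact h2
        have hinv1 : (t :: vs₂.dropLast).Nodup := by
          refine List.nodup_cons.2 ⟨?_, hnd2⟩
          intro hh
          exact hdisj12 htvs₁ hh
        have hinv2 : b ∉ vs₂.dropLast := by
          intro hh
          exact hbd (by rw [hdrop]; exact List.mem_append_right _ hh)
        obtain hres | hres := ih es₂ vs₂ t b (by omega) ⟨hwk2, hlast2⟩ hinv1 hinv2 htA hb h0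
        · obtain ⟨a', b', es', vs', p1, p2, p3, p4, p5, p6, p7⟩ := hres
          exact Or.inl ⟨a', b', es', vs', p1, p2, p3, p4, p5,
            fun e hee => by rw [he]; exact List.mem_append_right _ (p6 e hee), p7⟩
        · exact absurd hres.2 htb
    · push_neg at hA
      by_cases hab : a = b
      · exact Or.inr ⟨hA, hab⟩
      · refine Or.inl ⟨a, b, es, vs, ha, hb, hab, ⟨hwf, ?_⟩, he₀, fun _ h => h, hA⟩
        refine List.nodup_cons.2 ⟨?_, ?_⟩
        · intro hh
          rcases mem_dropLast_or_getLast hvs hh with h' | h'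
          · exact hna h'
          · exact hab (h'.trans hlastb)
        · rw [← List.dropLast_append_getLast hvs, List.nodup_append']
          refine ⟨hndrop, by simp, ?_⟩
          intro t ht ht'
          rw [hlastb] at ht'
          rcases List.mem_singleton.1 ht' with rfl
          exact hbd ht
  
end Multigraph
namespace Multigraph

attribute [local instance 10] Classical.propDecidable

variable {V E : Type*} {G : Multigraph V E} {I : Set E} {u v w x y a b : V}
  {e f e₀ g : E} {es es₁ es₂ : List E} {vs vs₁ vs₂ : List V}

theorem IsCycle.split_two_paths (h : G.IsCycle I a es vs) (hb : b ∈ vs) (hab : a ≠ b) :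
    ∃ esP vsP esQ vsQ, G.IsPath I a esP vsP b ∧ G.IsPath I a esQ vsQ b ∧
      (∀ e, e ∈ es ↔ (e ∈ esP ∨ e ∈ esQ)) ∧ (∀ e, ¬ (e ∈ esP ∧ e ∈ esQ)) ∧
      (∀ x, ¬ (x ∈ vsP.dropLast ∧ x ∈ vsQ.dropLast)) ∧
      (∀ x ∈ vsP.dropLast, x ∈ vs) ∧ (∀ x ∈ vsQ.dropLast, x ∈ vs) := by
  obtain ⟨es₁, es₂, vs₁, vs₂, he, hv, hv1, hwf1, hwk2⟩ := h.1.1.split hb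
  have hvs : vs ≠ [] := h.vs_ne_nil
  have hndv : vs.Nodup := h.2.2.2
  have hnde : es.Nodup := h.2.2.1
  have hbl : b = vs₁.getLast hv1 := by rw [← hwf1.2, getLast_cons_eq hv1]
  have hvs₂ : vs₂ ≠ [] := by
    intro hh
    rw [hh, List.append_nil] at hv
    subst hv
    have : vs.getLast hvs = a := by
      have := h.1.2; rwa [getLast_cons_eq hvs] at this
    exact hab (this.symm.trans hbl.symm)
  have hlast2 : (b :: vs₂).getLast (by simp) = a := by
    have h2 := h.1.2
    rw [hv, getLast_cons_append a b vs₁ vs₂ hwf1.2] at h2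
    exact h2
  have hlastvs₂ : vs₂.getLast hvs₂ = a := by
    have := hlast2; rwa [getLast_cons_eq hvs₂] at this
  have havs₂ : a ∈ vs₂ := hlastvs₂ ▸ List.getLast_mem hvs₂
  have hbvs₁ : b ∈ vs₁ := hbl ▸ List.getLast_mem hv1
  have hndsplit := hv ▸ hndv
  have hnd1 : vs₁.Nodup := (List.nodup_append'.1 hndsplit).1
  have hnd2 : vs₂.Nodup := (List.nodup_append'.1 hndsplit).2.1
  have hdisj12 := (List.nodup_append'.1 hndsplit).2.2
  have hndesplit := he ▸ hnde
  have hnde1 : es₁.Nodup := (List.nodup_append'.1 hndesplit).1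
  have hnde2 : es₂.Nodup := (List.nodup_append'.1 hndesplit).2.1
  have hedisj := (List.nodup_append'.1 hndesplit).2.2
  have hpathP : G.IsPath I a es₁ vs₁ b := by
    refine ⟨hwf1, List.nodup_cons.2 ⟨?_, hnd1⟩⟩
    intro hh
    exact hdisj12 hh havs₂
  have hwfQ := IsWalkFrom.reverse (G := G) ⟨hwk2, hlast2⟩
  have hqform : (b :: vs₂).dropLast.reverse = vs₂.dropLast.reverse ++ [b] := by
    rw [dropLast_cons_ne b hvs₂, List.reverse_cons]
  have hpathQ : G.IsPath I a es₂.reverse ((b :: vs₂).dropLast.reverse) b := by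
    refine ⟨hwfQ, ?_⟩
    rw [hqform]
    refine List.nodup_cons.2 ⟨?_, ?_⟩
    · intro hh
      rcases List.mem_append.1 hh with hh' | hh'
      · rw [List.mem_reverse] at hh'
        exact getLast_not_mem_dropLast hvs₂ hnd2 (hlastvs₂ ▸ hh')
      · exact hab (List.mem_singleton.1 hh')
    · rw [List.nodup_append']
      refine ⟨by rw [List.nodup_reverse]; exact hnd2.sublist (List.dropLast_sublist vs₂),
        by simp, ?_⟩
      intro t ht ht'
      rcases List.mem_singleton.1 ht' with rfl
      rw [List.mem_reverse] at ht
      exact hdisj12 hbvs₁ ((List.dropLast_sublist vs₂).mem ht)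
  refine ⟨es₁, vs₁, es₂.reverse, (b :: vs₂).dropLast.reverse, hpathP, hpathQ, ?_, ?_, ?_, ?_, ?_⟩
  · intro e
    rw [he, List.mem_append, List.mem_reverse]
  · intro e ⟨h1, h2⟩
    rw [List.mem_reverse] at h2
    exact hedisj h1 h2
  · intro t ⟨h1, h2⟩
    rw [hqform, List.dropLast_concat, List.mem_reverse] at h2
    exact hdisj12 ((List.dropLast_sublist vs₁).mem h1) ((List.dropLast_sublist vs₂).mem h2)
  · intro t ht
    rw [hv]
    exact List.mem_append_left _ ((List.dropLast_sublist vs₁).mem ht)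
  · intro t ht
    rw [hqform, List.dropLast_concat, List.mem_reverse] at ht
    rw [hv]
    exact List.mem_append_right _ ((List.dropLast_sublist vs₂).mem ht)

end Multigraph
namespace Multigraph

attribute [local instance 10] Classical.propDecidable

variable {V E : Type*} {G : Multigraph V E} {I Z₁ Z₂ : Set E} {u v w x y a b : V}
  {e f e₀ g : E} {es : List E} {vs : List V}

theorem IsPath.mono_set {J : Set E} (h : G.IsPath I u es vs w) (hJ : ∀ e ∈ es, e ∈ J) :
    G.IsPath J u es vs w := ⟨⟨h.1.1.mono hJ, h.1.2⟩, h.2⟩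

theorem bad_main_case (hc1 : G.IsCycleIn I Z₁) (hc2 : G.IsCycleIn I Z₂) (hne : Z₁ ≠ Z₂)
    (hconn : ∃ a b, a ∈ G.verts Z₁ ∧ b ∈ G.verts Z₂ ∧ G.Reachable I a b)
    (he₀ : ∃ e₀, e₀ ∈ Z₂ ∧ e₀ ∉ Z₁) :
    ∃ S, S ⊆ I ∧ (G.IsFigureEight S ∨ G.IsDumbbell S ∨ G.IsTheta S) := by
  classical
  set A : Set V := G.verts Z₁ with hA
  have hZ1end : ∀ g ∈ Z₁, ∀ y ∈ G.inc g, y ∈ A := fun g hg y hy => ⟨g, hg, hy⟩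
  have hZ2end : ∀ g ∈ Z₂, ∀ y ∈ G.inc g, y ∈ G.verts Z₂ := fun g hg y hy => ⟨g, hg, hy⟩
  by_cases hver : ∃ x, x ∈ A ∧ x ∈ G.verts Z₂
  · -- cycles share a vertex x
    obtain ⟨x, hxA, hxZ2⟩ := hver
    obtain ⟨e₀, he₀2, he₀1⟩ := he₀
    obtain ⟨v2, es2, vs2, hcy2, hZ2eq⟩ := id hc2
    have hxvs2 : x ∈ vs2 := by
      have := hcy2.verts_eq ▸ (hZ2eq ▸ hxZ2)
      exact this
    obtain ⟨es', vs', cyc', hpe, hpv⟩ := hcy2.rotate hxvs2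
    have hZ2eq' : Z₂ = {e | e ∈ es'} := by
      rw [hZ2eq]
      ext e
      exact ⟨fun he => hpe.mem_iff.2 he, fun he => hpe.mem_iff.1 he⟩
    have he₀es : e₀ ∈ es' := by
      have := hZ2eq' ▸ he₀2
      exact this
    have hvs' : vs' ≠ [] := cyc'.vs_ne_nil
    have hnd' : vs'.Nodup := cyc'.2.2.2
    have hlast' : vs'.getLast hvs' = x := by
      have := cyc'.1.2; rwa [getLast_cons_eq hvs'] at this
    have hinv1 : (x :: vs'.dropLast).Nodup := by
      refine List.nodup_cons.2 ⟨?_, hnd'.sublist (List.dropLast_sublist vs')⟩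
      intro hh
      exact getLast_not_mem_dropLast hvs' hnd' (hlast' ▸ hh)
    have hinv2 : x ∉ vs'.dropLast := (List.nodup_cons.1 hinv1).1
    obtain hres | hres := scan_aux (A := A) (e₀ := e₀) es'.length es' vs' x x le_rfl
      cyc'.1 hinv1 hinv2 hxA hxA he₀es
    · -- theta case
      obtain ⟨a', b', esR, vsR, ha'A, hb'A, hne', hpathR, he₀R, hsubR, hintR⟩ := hres
      have hedgeR : ∀ g ∈ esR, g ∉ Z₁ :=
        scan_edge_excl hpathR.1 hintR hZ1end he₀R he₀1
      obtain ⟨v1, es1, vs1, hcy1, hZ1eq⟩ := id hc1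
      have hAeq : A = {y | y ∈ vs1} := by
        rw [hA, hZ1eq, hcy1.verts_eq]
      have ha'vs1 : a' ∈ vs1 := by rw [hAeq] at ha'A; exact ha'A
      obtain ⟨es1', vs1', cyc1', hpe1, hpv1⟩ := hcy1.rotate ha'vs1
      have hb'vs1' : b' ∈ vs1' := by
        rw [hAeq] at hb'A
        exact hpv1.mem_iff.2 hb'A
      obtain ⟨esP, vsP, esQ, vsQ, hpathP, hpathQ, hiff, hdisjPQ, hdisjVPQ, hPv, hQv⟩ :=
        cyc1'.split_two_paths hb'vs1' hne'
      have hPZ1 : ∀ e ∈ esP, e ∈ Z₁ := by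
        intro e hee
        rw [hZ1eq]
        exact hpe1.mem_iff.1 ((hiff e).2 (Or.inl hee))
      have hQZ1 : ∀ e ∈ esQ, e ∈ Z₁ := by
        intro e hee
        rw [hZ1eq]
        exact hpe1.mem_iff.1 ((hiff e).2 (Or.inr hee))
      have hPvA : ∀ t ∈ vsP.dropLast, t ∈ A := by
        intro t ht
        rw [hAeq]
        exact hpv1.mem_iff.1 (hPv t ht)
      have hQvA : ∀ t ∈ vsQ.dropLast, t ∈ A := by
        intro t ht
        rw [hAeq]
        exact hpv1.mem_iff.1 (hQv t ht)
      set D : Set E := {e | e ∈ esP ∨ e ∈ esQ ∨ e ∈ esR} with hD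
      have hDI : D ⊆ I := by
        rintro e (hee | hee | hee)
        · exact cyc1'.1.1.edges_mem e ((hiff e).2 (Or.inl hee))
        · exact cyc1'.1.1.edges_mem e ((hiff e).2 (Or.inr hee))
        · exact hpathR.1.1.edges_mem e hee
      refine ⟨D, hDI, Or.inr (Or.inr ?_)⟩
      refine ⟨a', b', esP, esQ, esR, vsP, vsQ, vsR, hne',
        hpathP.mono_set (fun e hee => Or.inl hee),
        hpathQ.mono_set (fun e hee => Or.inr (Or.inl hee)),
        hpathR.mono_set (fun e hee => Or.inr (Or.inr hee)),
        hdisjPQ, ?_, ?_, hdisjVPQ, ?_, ?_, rfl⟩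
      · rintro e ⟨h1, h2⟩
        exact hedgeR e h2 (hPZ1 e h1)
      · rintro e ⟨h1, h2⟩
        exact hedgeR e h2 (hQZ1 e h1)
      · rintro t ⟨h1, h2⟩
        exact hintR t h2 (hPvA t h1)
      · rintro t ⟨h1, h2⟩
        exact hintR t h2 (hQvA t h1)
    · -- figure-eight case
      obtain ⟨hint, -⟩ := hres
      have hvertsZ2 : G.verts Z₂ = {y | y ∈ vs'} := by
        rw [hZ2eq', cyc'.verts_eq]
      have hverts : G.verts Z₁ ∩ G.verts Z₂ = {x} := by
        apply Set.Subset.antisymm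
        · rintro t ⟨ht1, ht2⟩
          rw [hvertsZ2] at ht2
          rcases mem_dropLast_or_getLast hvs' ht2 with h' | h'
          · exact absurd ht1 (hint t h')
          · rw [h', hlast']
            rfl
        · rintro t rfl
          exact ⟨hxA, hxZ2⟩
      have hedisj : Disjoint Z₁ Z₂ := by
        rw [Set.disjoint_left]
        intro f hf1 hf2
        obtain ⟨p, q, hpq⟩ := sym2_exists_eq (G.inc f)
        have hp : p ∈ G.verts Z₁ ∩ G.verts Z₂ :=
          ⟨⟨f, hf1, by rw [hpq]; simp⟩, ⟨f, hf2, by rw [hpq]; simp⟩⟩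
        have hq : q ∈ G.verts Z₁ ∩ G.verts Z₂ :=
          ⟨⟨f, hf1, by rw [hpq]; simp⟩, ⟨f, hf2, by rw [hpq]; simp⟩⟩
        rw [hverts] at hp hq
        rcases hp with rfl
        rcases hq with rfl
        -- f is a loop at p = q = x: both cycles are just {f}
        obtain ⟨v1, es1, vs1, hcy1, hZ1eq⟩ := id hc1
        have hfes1 : f ∈ es1 := by
          have := hZ1eq ▸ hf1
          exact this
        have hfes' : f ∈ es' := by
          have := hZ2eq' ▸ hf2
          exact this
        have h1 : es1 = [f] := hcy1.loop_eq hfes1 hpq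
        have h2 : es' = [f] := cyc'.loop_eq hfes' hpq
        apply hne
        rw [hZ1eq, hZ2eq', h1, h2]
      refine ⟨Z₁ ∪ Z₂, Set.union_subset hc1.subset hc2.subset, Or.inl ?_⟩
      exact ⟨Z₁, Z₂, hc1.of_subset Set.subset_union_left,
        hc2.of_subset Set.subset_union_right, hedisj, ⟨x, hverts⟩, rfl⟩
  · -- vertex-disjoint cycles: dumbbell
    push_neg at hver
    have hdisj : Disjoint A (G.verts Z₂) := Set.disjoint_left.2 hver
    obtain ⟨a, b, ha, hb, hreach⟩ := hconn
    obtain ⟨u, w, es, vs, hpath, hesne, hu, hw, hint⟩ := connect_path hdisj ha hb hreach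
    have hedge : ∀ g ∈ es, g ∉ Z₁ ∪ Z₂ :=
      trimmed_edge_excl hdisj hpath.1 hu hw hint hZ1end hZ2end
    set S : Set E := Z₁ ∪ Z₂ ∪ {e | e ∈ es} with hS
    have hSI : S ⊆ I := by
      rintro e ((hee | hee) | hee)
      · exact hc1.subset hee
      · exact hc2.subset hee
      · exact hpath.1.1.edges_mem e hee
    refine ⟨S, hSI, Or.inr (Or.inl ?_)⟩
    refine ⟨Z₁, Z₂, u, w, es, vs,
      hc1.of_subset (Set.subset_union_left.trans Set.subset_union_left),
      hc2.of_subset (Set.subset_union_right.trans Set.subset_union_left),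
      hdisj, hpath.mono_set (fun e hee => Or.inr hee), hesne, hu, hw, ?_, hedge, rfl⟩
    intro t ht
    exact hint t ht

theorem Bad.contains_shape (h : G.Bad I) :
    ∃ S, S ⊆ I ∧ (G.IsFigureEight S ∨ G.IsDumbbell S ∨ G.IsTheta S) := by
  obtain ⟨Z₁, Z₂, hc1, hc2, hne, a, b, ha, hb, hreach⟩ := h
  by_cases hsub : ∀ e ∈ Z₂, e ∈ Z₁
  · have he₀ : ∃ e₀, e₀ ∈ Z₁ ∧ e₀ ∉ Z₂ := by
      by_contra hh
      push_neg at hh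
      exact hne (Set.Subset.antisymm hh hsub)
    exact bad_main_case hc2 hc1 (Ne.symm hne) ⟨b, a, hb, ha, hreach.symm⟩ he₀
  · push_neg at hsub
    obtain ⟨e₀, he₀2, he₀1⟩ := hsub
    exact bad_main_case hc1 hc2 hne ⟨a, b, ha, hb, hreach⟩ ⟨e₀, he₀2, he₀1⟩
end Multigraph
namespace Multigraph

variable {V E : Type*} {G : Multigraph V E} {D : Set E}

theorem shape_bad (h : G.IsFigureEight D ∨ G.IsDumbbell D ∨ G.IsTheta D) : G.Bad D := by
  rcases h with h | h | h
  · exact h.bad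
  · exact h.bad
  · exact h.bad

theorem shape_shapely (h : G.IsFigureEight D ∨ G.IsDumbbell D ∨ G.IsTheta D) :
    G.Shapely D := by
  rcases h with h | h | h
  · exact h.shapely
  · exact h.shapely
  · exact h.shapely

end Multigraph

theorem dep_iff_bad {V E : Type*} (G : Multigraph V E) (M : Matroid E)
    (hM : Multigraph.IsBicircularOf G M) (X : Set E) : M.Dep X ↔ G.Bad X := by
  rw [Matroid.dep_iff, hM.2 X, ← Multigraph.not_bicircIndep_iff]
  constructor
  · exact fun h => h.1
  · intro h
    exact ⟨h, by rw [hM.1]; exact Set.subset_univ X⟩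

/-- The circuits of the bicircular matroid `B(G)` are exactly the edge
sets of subdivisions of: two loops at a vertex, a dumbbell, or a theta graph. -/
theorem bicircular_circuit_iff {V E : Type*} (G : Multigraph V E) (M : Matroid E)
    (hM : Multigraph.IsBicircularOf G M) (C : Set E) :
    Circuit M C ↔ (G.IsFigureEight C ∨ G.IsDumbbell C ∨ G.IsTheta C) := by
  constructor
  · rintro ⟨hdep, hmin⟩
    have hbad : G.Bad C := (dep_iff_bad G M hM C).1 hdep
    obtain ⟨S, hSC, hshape⟩ := hbad.contains_shape
    have hSC' : S = C := by
      by_contra hne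
      exact hmin S ⟨hSC, fun hh => hne (Set.Subset.antisymm hSC hh)⟩
        ((dep_iff_bad G M hM S).2 (Multigraph.shape_bad hshape))
    rw [← hSC']
    exact hshape
  · intro hshape
    refine ⟨(dep_iff_bad G M hM C).2 (Multigraph.shape_bad hshape), ?_⟩
    intro D hD hdep
    have hbadD : G.Bad D := (dep_iff_bad G M hM D).1 hdep
    obtain ⟨S, hSD, hshapeS⟩ := hbadD.contains_shape
    have hEq : S = C := (Multigraph.shape_shapely hshape).eq_of_subset
      (Multigraph.shape_shapely hshapeS) (hSD.trans hD.1)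
    rw [hEq] at hSD
    exact hD.2 hSD

end Paper
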